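/- arXiv:math/0510413 — 5 statements merged into one kernel-verified Lean document; each statement's English description precedes it below -/
import Mathlib

section
/- Let M be an immersed surface in ℝ⁴, let p ∈ M be a non-umbilic point, and let g denote the first fundamental form of M. Then there exists a unique vector c_p ∈ N_pM such that c_p·α_p = g_p (i.e. ⟨c_p, α_p(X,Y)⟩ = ⟨X,Y⟩ for all X,Y ∈ T_pM) if and only if p is a semiumbilic point that is not a point of inflection. -/
/- Local framework: an immersed surface in ℝⁿ is given by a smooth parametrization
`ψ : Pl → Amb n` (`Pl = ℝ²` the parameter domain) whose differential is everywhere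
injective.  Tangent/normal spaces, fundamental forms, connections, curvature ellipse,
(semi)umbilic and inflection points, flatness, etc. are defined from `ψ`. -/

noncomputable section
open scoped RealInnerProductSpace

/-- The parameter plane ℝ². -/
abbrev Pl := EuclideanSpace ℝ (Fin 2)
/-- Ambient Euclidean space ℝⁿ. -/
abbrev Amb (n : ℕ) := EuclideanSpace ℝ (Fin n)

/-- `ψ` is a smooth immersion. -/
def Immersion {n : ℕ} (ψ : Pl → Amb n) : Prop :=
  ContDiff ℝ (⊤ : ℕ∞) ψ ∧ ∀ q, Function.Injective (fderiv ℝ ψ q)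

/-- Tangent plane `T_pM` (as a linear subspace of the ambient space) at the point
with parameter `q`. -/
def Tang {n : ℕ} (ψ : Pl → Amb n) (q : Pl) : Submodule ℝ (Amb n) :=
  LinearMap.range (fderiv ℝ ψ q : Pl →ₗ[ℝ] Amb n)

/-- Normal space `N_pM = (T_pM)ᗮ`. -/
def Nor {n : ℕ} (ψ : Pl → Amb n) (q : Pl) : Submodule ℝ (Amb n) :=
  (Tang ψ q)ᗮ

/-- Tangential part `X ↦ X^⊤` of an ambient vector. -/
def tproj {n : ℕ} (ψ : Pl → Amb n) (q : Pl) (x : Amb n) : Amb n :=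
  ((Tang ψ q).orthogonalProjectionOnto x : Amb n)

/-- Normal part `X ↦ X^⊥` of an ambient vector. -/
def nproj {n : ℕ} (ψ : Pl → Amb n) (q : Pl) (x : Amb n) : Amb n :=
  x - tproj ψ q x

/-- The second fundamental form `α` at the point of parameter `q`, evaluated on the
tangent vectors `dψ_q v`, `dψ_q w` (for parameter directions `v w : Pl`):
`α(dψ v, dψ w) = (D_{dψ v} (dψ w))^⊥ = (∂_v ∂_w ψ)^⊥`. -/
def sff {n : ℕ} (ψ : Pl → Amb n) (q : Pl) (v w : Pl) : Amb n :=
  nproj ψ q (fderiv ℝ (fun x => fderiv ℝ ψ x w) q v)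

/-- The curvature ellipse at `q`: image of `η(t) = α(t,t)` over the unit tangent
vectors `t = dψ_q v`. -/
def Ellipse {n : ℕ} (ψ : Pl → Amb n) (q : Pl) : Set (Amb n) :=
  {z | ∃ v : Pl, ‖fderiv ℝ ψ q v‖ = 1 ∧ z = sff ψ q v v}

/-- `q` is an umbilic point: the curvature ellipse degenerates to a point. -/
def Umbilic {n : ℕ} (ψ : Pl → Amb n) (q : Pl) : Prop :=
  ∃ a : Amb n, Ellipse ψ q = {a}

/-- `q` is a semiumbilic point: the curvature ellipse lies in an affine line. -/
def Semiumbilic {n : ℕ} (ψ : Pl → Amb n) (q : Pl) : Prop :=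
  ∃ a b : Amb n, Ellipse ψ q ⊆ {x | ∃ s : ℝ, x = a + s • b}

/-- `q` is a point of inflection: the curvature ellipse lies in a line through the
origin of the normal space. -/
def Inflection {n : ℕ} (ψ : Pl → Amb n) (q : Pl) : Prop :=
  ∃ b : Amb n, Ellipse ψ q ⊆ {x | ∃ s : ℝ, x = s • b}

/-- The surface is semiumbilical: every point is semiumbilic and not of inflection. -/
def Semiumbilical {n : ℕ} (ψ : Pl → Amb n) : Prop :=
  ∀ q, Semiumbilic ψ q ∧ ¬ Inflection ψ q

/-- A smooth ambient-valued field which is everywhere tangent. -/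
def TangentField {n : ℕ} (ψ : Pl → Amb n) (F : Pl → Amb n) : Prop :=
  ContDiff ℝ (⊤ : ℕ∞) F ∧ ∀ q, F q ∈ Tang ψ q

/-- A smooth ambient-valued field which is everywhere normal (a section of `NM`). -/
def NormalField {n : ℕ} (ψ : Pl → Amb n) (F : Pl → Amb n) : Prop :=
  ContDiff ℝ (⊤ : ℕ∞) F ∧ ∀ q, F q ∈ Nor ψ q

/-- The tangent covariant derivative `∇^⊤ F = (D F)^⊤` of an ambient field `F`
along the `i`-th coordinate direction of the parameter plane. -/
def covT {n : ℕ} (ψ : Pl → Amb n) (F : Pl → Amb n) (i : Fin 2) (q : Pl) : Amb n :=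
  tproj ψ q (fderiv ℝ F q (EuclideanSpace.single i (1:ℝ)))

/-- The tangent connection `∇^⊤` is flat: its curvature `R(∂₁,∂₂)` annihilates every
smooth tangent field (by tensoriality of the curvature this means `R = 0`, since the
coordinate fields `∂₁, ∂₂` commute and span). -/
def FlatSurface {n : ℕ} (ψ : Pl → Amb n) : Prop :=
  ∀ F : Pl → Amb n, TangentField ψ F →
    ∀ q, covT ψ (covT ψ F 1) 0 q = covT ψ (covT ψ F 0) 1 q

/-- A tangent field is parallel: `∇^⊤ Y = (D Y)^⊤ = 0` in every tangent direction. -/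
def ParallelT {n : ℕ} (ψ : Pl → Amb n) (F : Pl → Amb n) : Prop :=
  ∀ q (v : Pl), tproj ψ q (fderiv ℝ F q v) = 0

/-- A normal section is parallel: `∇^⊥ u = (D u)^⊥ = 0` in every tangent direction. -/
def ParallelN {n : ℕ} (ψ : Pl → Amb n) (F : Pl → Amb n) : Prop :=
  ∀ q (v : Pl), nproj ψ q (fderiv ℝ F q v) = 0

/-- `c · α = g`: the normal section `c` satisfies `⟨c, α(X,Y)⟩ = ⟨X,Y⟩` for all
tangent vectors `X = dψ v`, `Y = dψ w`. -/
def CAG {n : ℕ} (ψ : Pl → Amb n) (c : Pl → Amb n) : Prop :=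
  ∀ q (v w : Pl), (⟪c q, sff ψ q v w⟫) = ⟪fderiv ℝ ψ q v, fderiv ℝ ψ q w⟫

/-- `e` is a tangent field with `∇^⊤_X e = X` for every tangent vector `X = dψ v`. -/
def EulerField {n : ℕ} (ψ : Pl → Amb n) (e : Pl → Amb n) : Prop :=
  TangentField ψ e ∧ ∀ q (v : Pl), tproj ψ q (fderiv ℝ e q v) = fderiv ℝ ψ q v

/-- `j` is the tangent field `½ grad⟨c,c⟩` (gradient with respect to the first
fundamental form): `⟨2 j, dψ v⟩ = d⟨c,c⟩(dψ v)` for every direction `v`. -/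
def HalfGradCSq {n : ℕ} (ψ : Pl → Amb n) (c j : Pl → Amb n) : Prop :=
  TangentField ψ j ∧
    ∀ q (v : Pl), 2 * (⟪j q, fderiv ℝ ψ q v⟫) = fderiv ℝ (fun x => (⟪c x, c x⟫ : ℝ)) q v

/-- `k` is a normal section with `(D_X (e - k))^⊥ = 0` for all tangent `X`. -/
def KField {n : ℕ} (ψ : Pl → Amb n) (e k : Pl → Amb n) : Prop :=
  NormalField ψ k ∧ ∀ q (v : Pl), nproj ψ q (fderiv ℝ (fun x => e x - k x) q v) = 0

/-- `dψ_q v` is a (unit) asymptotic direction at `q`: `η(t) = α(t,t)` is an endpoint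
(extreme point) of the segment into which the curvature ellipse degenerates. -/
def IsAsymptotic {n : ℕ} (ψ : Pl → Amb n) (q : Pl) (v : Pl) : Prop :=
  ‖fderiv ℝ ψ q v‖ = 1 ∧ sff ψ q v v ∈ Set.extremePoints ℝ (Ellipse ψ q)


section Infra
variable {n : ℕ} {ψ : Pl → Amb n} {q : Pl}

lemma nproj_mem (x : Amb n) : nproj ψ q x ∈ Nor ψ q :=
  Submodule.sub_starProjection_mem_orthogonal x

lemma nproj_add (x y : Amb n) : nproj ψ q (x + y) = nproj ψ q x + nproj ψ q y := by
  simp only [nproj, tproj, map_add, Submodule.coe_add]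
  abel

lemma nproj_smul (a : ℝ) (x : Amb n) : nproj ψ q (a • x) = a • nproj ψ q x := by
  simp only [nproj, tproj, map_smul, Submodule.coe_smul, smul_sub]

lemma sff_eq (hψ : ContDiff ℝ (⊤ : ℕ∞) ψ) (v w : Pl) :
    sff ψ q v w = nproj ψ q (fderiv ℝ (fderiv ℝ ψ) q v w) := by
  have hdiff2 : DifferentiableAt ℝ (fderiv ℝ ψ) q :=
    ((hψ.fderiv_right (m := 1) (by norm_cast)).differentiable one_ne_zero q)
  have h := fderiv_clm_apply hdiff2 (differentiableAt_const w)
  unfold sff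
  rw [h]
  simp

lemma sff_symm (hψ : ContDiff ℝ (⊤ : ℕ∞) ψ) (v w : Pl) :
    sff ψ q v w = sff ψ q w v := by
  rw [sff_eq hψ, sff_eq hψ]
  exact congrArg (nproj ψ q) ((hψ.contDiffAt.isSymmSndFDerivAt (by rw [minSmoothness_of_isRCLikeNormedField]; exact WithTop.coe_le_coe.mpr le_top)) v w)

end Infra

private lemma solve_perp {d0 d1 p0 p1 : ℝ} (hd : ¬(d0 = 0 ∧ d1 = 0))
    (hp : p0*d0 + p1*d1 = 0) : ∃ r : ℝ, p0 = r * (-d1) ∧ p1 = r * d0 := by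
  by_cases h0 : d0 = 0
  · have h1 : d1 ≠ 0 := fun h => hd ⟨h0, h⟩
    exact ⟨-p0/d1, by field_simp, by field_simp; nlinarith [hp]⟩
  · exact ⟨p1/d0, by field_simp; nlinarith [hp], by field_simp⟩

private lemma colin {b0 b1 h0 h1 : ℝ} (hb : ¬(b0 = 0 ∧ b1 = 0))
    (hdet : b0*h1 - b1*h0 = 0) : ∃ s : ℝ, h0 = s*b0 ∧ h1 = s*b1 := by
  by_cases h0' : b0 = 0
  · have h1' : b1 ≠ 0 := fun h => hb ⟨h0', h⟩
    exact ⟨h1/b1, by field_simp; nlinarith [hdet], by field_simp⟩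
  · exact ⟨h0/b0, by field_simp, by field_simp; nlinarith [hdet]⟩

private lemma planar_dep {h0 h1 d0 d1 : ℝ} (hd : ¬(d0 = 0 ∧ d1 = 0)) :
    (∃! p : ℝ × ℝ, (p.1*h0 + p.2*h1 = 1 ∧ p.1*d0 + p.2*d1 = 0)) ↔
      ¬ ∃ s : ℝ, h0 = s*d0 ∧ h1 = s*d1 := by
  constructor
  · rintro ⟨p, ⟨hp1, hp2⟩, -⟩ ⟨s, hs0, hs1⟩
    rw [hs0, hs1] at hp1
    have hz : s * (p.1*d0 + p.2*d1) = 0 := by rw [hp2, mul_zero]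
    have : (0:ℝ) = 1 := by linear_combination hp1 - hz
    norm_num at this
  · intro hno
    set K := d0*h1 - d1*h0 with hK
    have hKne : K ≠ 0 := by
      intro h
      exact hno (colin hd (by linarith [h]))
    refine ⟨((-d1)/K, d0/K), ⟨by field_simp; ring, by field_simp; ring⟩, ?_⟩
    rintro ⟨q0, q1⟩ ⟨hq1, hq2⟩
    obtain ⟨r, hr0, hr1⟩ := solve_perp hd hq2
    have hr0' : q0 = r * -d1 := hr0
    have hr1' : q1 = r * d0 := hr1
    have hq1' : q0 * h0 + q1 * h1 = 1 := hq1
    have hrK : r * K = 1 := by rw [hK]; rw [hr0', hr1'] at hq1'; linear_combination hq1'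
    have hrv : r = 1/K := by field_simp at hrK ⊢; linarith
    simp only [Prod.mk.injEq]
    constructor
    · rw [hr0', hrv]; field_simp
    · rw [hr1', hrv]; field_simp

private lemma planar {h0 h1 b0 b1 c0 c1 : ℝ} (hbc : ¬(b0 = 0 ∧ b1 = 0 ∧ c0 = 0 ∧ c1 = 0)) :
    (∃! p : ℝ × ℝ, (p.1*h0 + p.2*h1 = 1 ∧ p.1*b0 + p.2*b1 = 0 ∧ p.1*c0 + p.2*c1 = 0)) ↔
      ((∃ t : ℝ, (c0 = t*b0 ∧ c1 = t*b1) ∨ (b0 = t*c0 ∧ b1 = t*c1)) ∧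
        ¬ ∃ s t : ℝ, h0 = s*b0 + t*c0 ∧ h1 = s*b1 + t*c1) := by
  by_cases hdet : b0*c1 - b1*c0 = 0
  · -- dependent case
    by_cases hb : b0 = 0 ∧ b1 = 0
    · -- b = 0, use d := c
      have hc : ¬(c0 = 0 ∧ c1 = 0) := fun h => hbc ⟨hb.1, hb.2, h.1, h.2⟩
      have e1 : (∃! p : ℝ × ℝ, (p.1*h0 + p.2*h1 = 1 ∧ p.1*b0 + p.2*b1 = 0 ∧ p.1*c0 + p.2*c1 = 0))
          ↔ (∃! p : ℝ × ℝ, (p.1*h0 + p.2*h1 = 1 ∧ p.1*c0 + p.2*c1 = 0)) := by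
        apply existsUnique_congr
        intro p
        rw [hb.1, hb.2]
        constructor
        · rintro ⟨x, _, y⟩; exact ⟨x, y⟩
        · rintro ⟨x, y⟩; exact ⟨x, by ring, y⟩
      rw [e1, planar_dep hc]
      constructor
      · intro hno
        refine ⟨⟨0, Or.inr ⟨by rw [hb.1]; ring, by rw [hb.2]; ring⟩⟩, ?_⟩
        rintro ⟨s, t, hs0, hs1⟩
        exact hno ⟨t, by rw [hs0, hb.1]; ring, by rw [hs1, hb.2]; ring⟩
      · rintro ⟨-, hno⟩ ⟨s, hs0, hs1⟩
        exact hno ⟨0, s, by rw [hs0]; ring, by rw [hs1]; ring⟩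
    · -- b ≠ 0, use d := b, c = t • b
      obtain ⟨t₀, ht0, ht1⟩ : ∃ t : ℝ, c0 = t*b0 ∧ c1 = t*b1 := by
        obtain ⟨s, hs0, hs1⟩ := colin (h0 := c0) (h1 := c1) hb hdet
        exact ⟨s, hs0, hs1⟩
      have e1 : (∃! p : ℝ × ℝ, (p.1*h0 + p.2*h1 = 1 ∧ p.1*b0 + p.2*b1 = 0 ∧ p.1*c0 + p.2*c1 = 0))
          ↔ (∃! p : ℝ × ℝ, (p.1*h0 + p.2*h1 = 1 ∧ p.1*b0 + p.2*b1 = 0)) := by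
        apply existsUnique_congr
        intro p
        constructor
        · rintro ⟨x, y, -⟩; exact ⟨x, y⟩
        · rintro ⟨x, y⟩
          exact ⟨x, y, by rw [ht0, ht1]; linear_combination t₀ * y⟩
      rw [e1, planar_dep hb]
      constructor
      · intro hno
        refine ⟨⟨t₀, Or.inl ⟨ht0, ht1⟩⟩, ?_⟩
        rintro ⟨s, t, hs0, hs1⟩
        refine hno ⟨s + t*t₀, ?_, ?_⟩
        · rw [hs0, ht0]; ring
        · rw [hs1, ht1]; ring
      · rintro ⟨-, hno⟩ ⟨s, hs0, hs1⟩
        exact hno ⟨s, 0, by rw [hs0]; ring, by rw [hs1]; ring⟩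
  · -- independent case: both sides false
    constructor
    · rintro ⟨p, ⟨hp1, hp2, hp3⟩, -⟩
      exfalso
      have h1 : p.1 * (b0*c1 - b1*c0) = 0 := by linear_combination c1 * hp2 - b1 * hp3
      have h2 : p.2 * (b0*c1 - b1*c0) = 0 := by linear_combination b0 * hp3 - c0 * hp2
      have hp10 : p.1 = 0 := by
        rcases mul_eq_zero.mp h1 with h | h
        · exact h
        · exact absurd h hdet
      have hp20 : p.2 = 0 := by
        rcases mul_eq_zero.mp h2 with h | h
        · exact h
        · exact absurd h hdet
      rw [hp10, hp20] at hp1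
      norm_num at hp1
    · rintro ⟨⟨t, ht | ht⟩, -⟩
      · exact absurd (by rw [ht.1, ht.2]; ring) hdet
      · exact absurd (by rw [ht.1, ht.2]; ring) hdet


set_option maxHeartbeats 1000000 in
/-- For an immersed surface in ℝ⁴ and a non-umbilic point `p`, there is a
unique vector `c_p ∈ N_pM` with `c_p·α_p = g_p` iff `p` is a semiumbilic point which is
not a point of inflection. -/
theorem statement_1 (ψ : Pl → Amb 4) (hψ : Immersion ψ) (q : Pl) (hq : ¬ Umbilic ψ q) :
    (∃! c : Amb 4, c ∈ Nor ψ q ∧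
        ∀ v w : Pl, ⟪c, sff ψ q v w⟫ = ⟪fderiv ℝ ψ q v, fderiv ℝ ψ q w⟫) ↔
      (Semiumbilic ψ q ∧ ¬ Inflection ψ q) := by
  obtain ⟨hsm, hinj⟩ := hψ
  -- dimension of tangent space
  have hT2 : Module.finrank ℝ (Tang ψ q) = 2 := by
    have h1 := LinearMap.finrank_range_of_inj
      (f := ((fderiv ℝ ψ q : Pl →L[ℝ] Amb 4) : Pl →ₗ[ℝ] Amb 4)) (by simpa using hinj q)
    rw [finrank_euclideanSpace_fin] at h1; exact h1
  -- orthonormal basis of the tangent space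
  let ob : OrthonormalBasis (Fin 2) ℝ (Tang ψ q) :=
    (stdOrthonormalBasis ℝ (Tang ψ q)).reindex (finCongr hT2)
  set E : Fin 2 → Amb 4 := fun i => (ob i : Amb 4) with hE
  have hEE : ∀ i j, ⟪E i, E j⟫ = if i = j then 1 else 0 := by
    intro i j
    have h := orthonormal_iff_ite.mp ob.orthonormal i j
    simpa [hE, Submodule.coe_inner] using h
  have hE00 : ⟪E 0, E 0⟫ = 1 := by simpa using hEE 0 0
  have hE01 : ⟪E 0, E 1⟫ = 0 := by simpa using hEE 0 1
  have hE11 : ⟪E 1, E 1⟫ = 1 := by simpa using hEE 1 1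
  have hE10 : ⟪E 1, E 0⟫ = 0 := by simpa using hEE 1 0
  obtain ⟨u0, hu0⟩ := LinearMap.mem_range.mp (show (ob 0 : Amb 4) ∈ LinearMap.range (fderiv ℝ ψ q : Pl →ₗ[ℝ] Amb 4) from (ob 0).2)
  obtain ⟨u1, hu1⟩ := LinearMap.mem_range.mp (show (ob 1 : Amb 4) ∈ LinearMap.range (fderiv ℝ ψ q : Pl →ₗ[ℝ] Amb 4) from (ob 1).2)
  have hu0' : fderiv ℝ ψ q u0 = E 0 := hu0
  have hu1' : fderiv ℝ ψ q u1 = E 1 := hu1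
  -- representation of tangent vectors
  have hTrep : ∀ x, x ∈ Tang ψ q → x = ⟪E 0, x⟫ • E 0 + ⟪E 1, x⟫ • E 1 := by
    intro x hx
    have h := ob.sum_repr' (⟨x, hx⟩ : Tang ψ q)
    have h2 := congrArg (Subtype.val) h
    simpa [Fin.sum_univ_two, hE, Submodule.coe_inner] using h2.symm
  have hLmem : ∀ v : Pl, fderiv ℝ ψ q v ∈ Tang ψ q := fun v => ⟨v, rfl⟩
  have hrep : ∀ v : Pl,
      v = ⟪E 0, fderiv ℝ ψ q v⟫ • u0 + ⟪E 1, fderiv ℝ ψ q v⟫ • u1 := by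
    intro v
    apply hinj q
    rw [map_add, map_smul, map_smul, hu0', hu1']
    exact hTrep _ (hLmem v)
  -- second fundamental form basics
  have hsff : ∀ v w : Pl, sff ψ q v w = nproj ψ q (fderiv ℝ (fderiv ℝ ψ) q v w) :=
    fun v w => sff_eq hsm v w
  have hf''sym : ∀ v w : Pl,
      fderiv ℝ (fderiv ℝ ψ) q v w = fderiv ℝ (fderiv ℝ ψ) q w v :=
    fun v w => (hsm.contDiffAt.isSymmSndFDerivAt (by rw [minSmoothness_of_isRCLikeNormedField]; exact WithTop.coe_le_coe.mpr le_top)) v w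
  have hbil : ∀ a b a' b' : ℝ,
      sff ψ q (a • u0 + b • u1) (a' • u0 + b' • u1)
        = (a*a') • sff ψ q u0 u0 + (a*b' + b*a') • sff ψ q u0 u1
            + (b*b') • sff ψ q u1 u1 := by
    intro a b a' b'
    have e : fderiv ℝ (fderiv ℝ ψ) q (a • u0 + b • u1) (a' • u0 + b' • u1)
        = (a*a') • fderiv ℝ (fderiv ℝ ψ) q u0 u0
            + (a*b' + b*a') • fderiv ℝ (fderiv ℝ ψ) q u0 u1
            + (b*b') • fderiv ℝ (fderiv ℝ ψ) q u1 u1 := by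
      simp only [map_add, map_smul, ContinuousLinearMap.add_apply,
        ContinuousLinearMap.coe_smul', Pi.smul_apply, hf''sym u1 u0]
      module
    rw [hsff, hsff, hsff, hsff, e, nproj_add, nproj_add, nproj_smul, nproj_smul, nproj_smul]
  have hLL : ∀ a b a' b' : ℝ,
      ⟪fderiv ℝ ψ q (a • u0 + b • u1), fderiv ℝ ψ q (a' • u0 + b' • u1)⟫
        = a*a' + b*b' := by
    intro a b a' b'
    rw [map_add, map_smul, map_smul, map_add, map_smul, map_smul, hu0', hu1']
    simp only [inner_add_left, inner_add_right, real_inner_smul_left, real_inner_smul_right,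
      hE00, hE01, hE11, hE10]
    ring
  -- abbreviations
  set A00 := sff ψ q u0 u0 with hA00
  set Cv := sff ψ q u0 u1 with hCv
  set A11 := sff ψ q u1 u1 with hA11
  set Hv := (2⁻¹ : ℝ) • (A00 + A11) with hHv
  set Bv := (2⁻¹ : ℝ) • (A00 - A11) with hBv
  have hA00e : A00 = Hv + Bv := by rw [hHv, hBv]; module
  have hA11e : A11 = Hv - Bv := by rw [hHv, hBv]; module
  -- ellipse parametrization
  have hsffv : ∀ a b : ℝ, a^2 + b^2 = 1 →
      sff ψ q (a • u0 + b • u1) (a • u0 + b • u1)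
        = Hv + (a^2 - b^2) • Bv + (2*(a*b)) • Cv := by
    intro a b hab
    rw [hbil a b a b, hHv, hBv, hCv]
    match_scalars
    · linear_combination (2⁻¹ : ℝ) * hab
    · ring
    · linear_combination (2⁻¹ : ℝ) * hab
  have hnorm1 : ∀ a b : ℝ, a^2 + b^2 = 1 → ‖fderiv ℝ ψ q (a • u0 + b • u1)‖ = 1 := by
    intro a b hab
    have h := hLL a b a b
    have h5 : ⟪fderiv ℝ ψ q (a • u0 + b • u1), fderiv ℝ ψ q (a • u0 + b • u1)⟫ = 1 := by
      rw [h]; nlinarith [hab]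
    rw [norm_eq_sqrt_real_inner, h5, Real.sqrt_one]
  have hmemE : ∀ z, z ∈ Ellipse ψ q ↔
      ∃ a b : ℝ, a^2 + b^2 = 1 ∧ z = Hv + (a^2 - b^2) • Bv + (2*(a*b)) • Cv := by
    intro z
    constructor
    · rintro ⟨v, hv1, hv2⟩
      refine ⟨⟪E 0, fderiv ℝ ψ q v⟫, ⟪E 1, fderiv ℝ ψ q v⟫, ?_, ?_⟩
      · have h1 : ⟪fderiv ℝ ψ q v, fderiv ℝ ψ q v⟫ = 1 := by
          rw [real_inner_self_eq_norm_mul_norm, hv1]; norm_num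
        have h2 := hLL (⟪E 0, fderiv ℝ ψ q v⟫) (⟪E 1, fderiv ℝ ψ q v⟫)
          (⟪E 0, fderiv ℝ ψ q v⟫) (⟪E 1, fderiv ℝ ψ q v⟫)
        rw [← hrep v] at h2
        linear_combination h1 - h2
      · have hab : (⟪E 0, fderiv ℝ ψ q v⟫)^2 + (⟪E 1, fderiv ℝ ψ q v⟫)^2 = 1 := by
          have h1 : ⟪fderiv ℝ ψ q v, fderiv ℝ ψ q v⟫ = 1 := by
            rw [real_inner_self_eq_norm_sq, hv1]; norm_num
          have h2 := hLL (⟪E 0, fderiv ℝ ψ q v⟫) (⟪E 1, fderiv ℝ ψ q v⟫)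
            (⟪E 0, fderiv ℝ ψ q v⟫) (⟪E 1, fderiv ℝ ψ q v⟫)
          rw [← hrep v] at h2
          linear_combination h1 - h2
        rw [hv2]
        conv_lhs => rw [hrep v]
        exact hsffv _ _ hab
    · rintro ⟨a, b, hab, hz⟩
      exact ⟨a • u0 + b • u1, hnorm1 a b hab, by rw [hsffv a b hab]; exact hz⟩
  -- special points of the ellipse
  have hmem1 : Hv + Bv ∈ Ellipse ψ q := (hmemE _).mpr ⟨1, 0, by norm_num, by module⟩
  have hmem2 : Hv - Bv ∈ Ellipse ψ q := (hmemE _).mpr ⟨0, 1, by norm_num, by module⟩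
  have hsq : Real.sqrt 2⁻¹ * Real.sqrt 2⁻¹ = 2⁻¹ := Real.mul_self_sqrt (by norm_num)
  have hmem3 : Hv + Cv ∈ Ellipse ψ q := by
    refine (hmemE _).mpr ⟨Real.sqrt 2⁻¹, Real.sqrt 2⁻¹, ?_, ?_⟩
    · rw [sq, hsq]; norm_num
    · rw [sub_self, show (2*(Real.sqrt 2⁻¹ * Real.sqrt 2⁻¹) : ℝ) = 1 by rw [hsq]; norm_num]
      module
  have hmem4 : Hv - Cv ∈ Ellipse ψ q := by
    refine (hmemE _).mpr ⟨Real.sqrt 2⁻¹, -Real.sqrt 2⁻¹, ?_, ?_⟩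
    · rw [neg_pow, sq, sq, hsq]; norm_num
    · rw [show ((Real.sqrt 2⁻¹)^2 - (-Real.sqrt 2⁻¹)^2 : ℝ) = 0 by ring,
        show (2*(Real.sqrt 2⁻¹ * -Real.sqrt 2⁻¹) : ℝ) = -1 by rw [← neg_mul_comm, neg_mul, hsq]; norm_num]
      module
  -- non-umbilic : (Bv, Cv) ≠ (0, 0)
  have hBC : ¬ (Bv = 0 ∧ Cv = 0) := by
    rintro ⟨hB0, hC0⟩
    apply hq
    refine ⟨Hv, Set.eq_singleton_iff_unique_mem.mpr ⟨?_, ?_⟩⟩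
    · simpa [hB0] using hmem1
    · intro z hz
      obtain ⟨a, b, hab, hz'⟩ := (hmemE z).mp hz
      rw [hz', hB0, hC0]; simp
  -- normal space
  have hN2 : Module.finrank ℝ (Nor ψ q) = 2 := by
    have h := Submodule.finrank_add_finrank_orthogonal (K := Tang ψ q)
    rw [hT2] at h
    have h4 : Module.finrank ℝ (Amb 4) = 4 := finrank_euclideanSpace_fin
    rw [h4] at h
    unfold Nor
    omega
  let nb : OrthonormalBasis (Fin 2) ℝ (Nor ψ q) :=
    (stdOrthonormalBasis ℝ (Nor ψ q)).reindex (finCongr hN2)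
  set f : Fin 2 → Amb 4 := fun i => (nb i : Amb 4) with hf
  have hff : ∀ i j, ⟪f i, f j⟫ = if i = j then 1 else 0 := by
    intro i j
    have h := orthonormal_iff_ite.mp nb.orthonormal i j
    simpa [hf, Submodule.coe_inner] using h
  have hf00 : ⟪f 0, f 0⟫ = 1 := by simpa using hff 0 0
  have hf01 : ⟪f 0, f 1⟫ = 0 := by simpa using hff 0 1
  have hf10 : ⟪f 1, f 0⟫ = 0 := by simpa using hff 1 0
  have hf11 : ⟪f 1, f 1⟫ = 1 := by simpa using hff 1 1
  have hfmem : ∀ i, f i ∈ Nor ψ q := fun i => (nb i).2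
  have hNrep : ∀ x, x ∈ Nor ψ q → x = ⟪f 0, x⟫ • f 0 + ⟪f 1, x⟫ • f 1 := by
    intro x hx
    have h := nb.sum_repr' (⟨x, hx⟩ : Nor ψ q)
    have h2 := congrArg (Subtype.val) h
    simpa [Fin.sum_univ_two, hf, Submodule.coe_inner] using h2.symm
  -- membership of the invariants in the normal space
  have hA00N : A00 ∈ Nor ψ q := by rw [hA00, hsff]; exact nproj_mem _
  have hA11N : A11 ∈ Nor ψ q := by rw [hA11, hsff]; exact nproj_mem _
  have hHN : Hv ∈ Nor ψ q := Submodule.smul_mem _ _ (Submodule.add_mem _ hA00N hA11N)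
  have hBN : Bv ∈ Nor ψ q := Submodule.smul_mem _ _ (Submodule.sub_mem _ hA00N hA11N)
  have hCN : Cv ∈ Nor ψ q := by rw [hCv, hsff]; exact nproj_mem _
  have hcoord : ∀ X Y : Amb 4, X ∈ Nor ψ q → Y ∈ Nor ψ q →
      (X = Y ↔ (⟪f 0, X⟫ = ⟪f 0, Y⟫ ∧ ⟪f 1, X⟫ = ⟪f 1, Y⟫)) := by
    intro X Y hX hY
    constructor
    · rintro rfl; exact ⟨rfl, rfl⟩
    · rintro ⟨hx, hy⟩; rw [hNrep X hX, hNrep Y hY, hx, hy]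
  have hinC : ∀ (x y : ℝ) (X : Amb 4),
      ⟪x • f 0 + y • f 1, X⟫ = x * ⟪f 0, X⟫ + y * ⟪f 1, X⟫ := by
    intro x y X
    rw [inner_add_left, real_inner_smul_left, real_inner_smul_left]
  -- per-candidate characterization
  have hciff : ∀ c : Amb 4,
      ((∀ v w : Pl, ⟪c, sff ψ q v w⟫ = ⟪fderiv ℝ ψ q v, fderiv ℝ ψ q w⟫) ↔
        (⟪c, Hv⟫ = 1 ∧ ⟪c, Bv⟫ = 0 ∧ ⟪c, Cv⟫ = 0)) := by
    intro c
    constructor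
    · intro h
      have h00 := h u0 u0
      have h01 := h u0 u1
      have h11 := h u1 u1
      rw [hu0', hE00] at h00
      rw [hu0', hu1', hE01] at h01
      rw [hu1', hE11] at h11
      rw [← hA00] at h00
      rw [← hCv] at h01
      rw [← hA11] at h11
      refine ⟨?_, ?_, ?_⟩
      · rw [hHv, real_inner_smul_right, inner_add_right, h00, h11]; norm_num
      · rw [hBv, real_inner_smul_right, inner_sub_right, h00, h11]; norm_num
      · exact h01
    · rintro ⟨hH, hB, hC⟩ v w
      have hcA00 : ⟪c, A00⟫ = 1 := by rw [hA00e, inner_add_right, hH, hB]; ring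
      have hcA11 : ⟪c, A11⟫ = 1 := by rw [hA11e, inner_sub_right, hH, hB]; ring
      rw [hrep v, hrep w, hbil, hLL,
        inner_add_right, inner_add_right, real_inner_smul_right, real_inner_smul_right,
        real_inner_smul_right, hcA00, hC, hcA11]
      ring
  -- reduction of the unique-existence to the planar problem
  have hLiff : (∃! c : Amb 4, c ∈ Nor ψ q ∧
        ∀ v w : Pl, ⟪c, sff ψ q v w⟫ = ⟪fderiv ℝ ψ q v, fderiv ℝ ψ q w⟫) ↔
      (∃! p : ℝ × ℝ, (p.1*⟪f 0, Hv⟫ + p.2*⟪f 1, Hv⟫ = 1 ∧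
        p.1*⟪f 0, Bv⟫ + p.2*⟪f 1, Bv⟫ = 0 ∧ p.1*⟪f 0, Cv⟫ + p.2*⟪f 1, Cv⟫ = 0)) := by
    constructor
    · rintro ⟨c, ⟨hcN, hcw⟩, hun⟩
      obtain ⟨hH, hB, hC⟩ := (hciff c).mp hcw
      refine ⟨(⟪f 0, c⟫, ⟪f 1, c⟫), ⟨?_, ?_, ?_⟩, ?_⟩
      · rw [← hinC, ← hNrep c hcN]; exact hH
      · rw [← hinC, ← hNrep c hcN]; exact hB
      · rw [← hinC, ← hNrep c hcN]; exact hC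
      · rintro ⟨x, y⟩ ⟨hp1, hp2, hp3⟩
        have hc'N : x • f 0 + y • f 1 ∈ Nor ψ q :=
          Submodule.add_mem _ (Submodule.smul_mem _ _ (hfmem 0)) (Submodule.smul_mem _ _ (hfmem 1))
        have hc'w : x • f 0 + y • f 1 = c := by
          apply hun
          refine ⟨hc'N, (hciff _).mpr ⟨?_, ?_, ?_⟩⟩
          · rw [hinC]; exact hp1
          · rw [hinC]; exact hp2
          · rw [hinC]; exact hp3
        have hx : ⟪f 0, x • f 0 + y • f 1⟫ = x := by
          rw [inner_add_right, real_inner_smul_right, real_inner_smul_right, hf00, hf01]; ring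
        have hy : ⟪f 1, x • f 0 + y • f 1⟫ = y := by
          rw [inner_add_right, real_inner_smul_right, real_inner_smul_right, hf10, hf11]; ring
        simp only [Prod.mk.injEq]
        constructor
        · rw [← hx, hc'w]
        · rw [← hy, hc'w]
    · rintro ⟨⟨x, y⟩, ⟨hp1, hp2, hp3⟩, hun⟩
      have hc'N : x • f 0 + y • f 1 ∈ Nor ψ q :=
        Submodule.add_mem _ (Submodule.smul_mem _ _ (hfmem 0)) (Submodule.smul_mem _ _ (hfmem 1))
      refine ⟨x • f 0 + y • f 1, ⟨hc'N, (hciff _).mpr ⟨?_, ?_, ?_⟩⟩, ?_⟩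
      · rw [hinC]; exact hp1
      · rw [hinC]; exact hp2
      · rw [hinC]; exact hp3
      · rintro c' ⟨hc'N', hc'w'⟩
        obtain ⟨hH', hB', hC'⟩ := (hciff c').mp hc'w'
        have hpair : (⟪f 0, c'⟫, ⟪f 1, c'⟫) = (x, y) := by
          apply hun
          refine ⟨?_, ?_, ?_⟩
          · rw [← hinC, ← hNrep c' hc'N']; exact hH'
          · rw [← hinC, ← hNrep c' hc'N']; exact hB'
          · rw [← hinC, ← hNrep c' hc'N']; exact hC'
        have h1 : ⟪f 0, c'⟫ = x := congrArg Prod.fst hpair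
        have h2 : ⟪f 1, c'⟫ = y := congrArg Prod.snd hpair
        rw [hNrep c' hc'N', h1, h2]
  -- coordinate versions of dependence conditions
  have hdep_iff : (∃ t : ℝ, Cv = t • Bv ∨ Bv = t • Cv) ↔
      (∃ t : ℝ, (⟪f 0, Cv⟫ = t*⟪f 0, Bv⟫ ∧ ⟪f 1, Cv⟫ = t*⟪f 1, Bv⟫) ∨
        (⟪f 0, Bv⟫ = t*⟪f 0, Cv⟫ ∧ ⟪f 1, Bv⟫ = t*⟪f 1, Cv⟫)) := by
    have hsR : ∀ (i : Fin 2) (r : ℝ) (X : Amb 4), ⟪f i, r • X⟫ = r * ⟪f i, X⟫ :=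
      fun i r X => real_inner_smul_right _ _ _
    constructor
    · rintro ⟨t, h | h⟩
      · exact ⟨t, Or.inl ⟨by rw [h, hsR], by rw [h, hsR]⟩⟩
      · exact ⟨t, Or.inr ⟨by rw [h, hsR], by rw [h, hsR]⟩⟩
    · rintro ⟨t, h | h⟩
      · refine ⟨t, Or.inl ((hcoord Cv (t • Bv) hCN (Submodule.smul_mem _ _ hBN)).mpr ⟨?_, ?_⟩)⟩
        · rw [hsR 0 t Bv]; exact h.1
        · rw [hsR 1 t Bv]; exact h.2
      · refine ⟨t, Or.inr ((hcoord Bv (t • Cv) hBN (Submodule.smul_mem _ _ hCN)).mpr ⟨?_, ?_⟩)⟩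
        · rw [hsR 0 t Cv]; exact h.1
        · rw [hsR 1 t Cv]; exact h.2
  have hcombo_iff : (∃ s t : ℝ, Hv = s • Bv + t • Cv) ↔
      (∃ s t : ℝ, ⟪f 0, Hv⟫ = s*⟪f 0, Bv⟫ + t*⟪f 0, Cv⟫ ∧
        ⟪f 1, Hv⟫ = s*⟪f 1, Bv⟫ + t*⟪f 1, Cv⟫) := by
    have hsR : ∀ (i : Fin 2) (r r' : ℝ) (X Y : Amb 4),
        ⟪f i, r • X + r' • Y⟫ = r * ⟪f i, X⟫ + r' * ⟪f i, Y⟫ := by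
      intro i r r' X Y
      rw [inner_add_right]
      rw [real_inner_smul_right, real_inner_smul_right]
    constructor
    · rintro ⟨s, t, h⟩
      exact ⟨s, t, by rw [h, hsR], by rw [h, hsR]⟩
    · rintro ⟨s, t, h0, h1⟩
      refine ⟨s, t, (hcoord Hv (s • Bv + t • Cv) hHN
        (Submodule.add_mem _ (Submodule.smul_mem _ _ hBN) (Submodule.smul_mem _ _ hCN))).mpr
        ⟨?_, ?_⟩⟩
      · rw [hsR 0 s t Bv Cv]; exact h0
      · rw [hsR 1 s t Bv Cv]; exact h1
  -- semiumbilic iff dependence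
  have hsemi : Semiumbilic ψ q ↔ (∃ t : ℝ, Cv = t • Bv ∨ Bv = t • Cv) := by
    constructor
    · rintro ⟨a, b, hline⟩
      obtain ⟨s1, hs1⟩ := hline hmem1
      obtain ⟨s2, hs2⟩ := hline hmem2
      obtain ⟨s3, hs3⟩ := hline hmem3
      obtain ⟨s4, hs4⟩ := hline hmem4
      have hBb : Bv = (2⁻¹*(s1-s2)) • b := by
        linear_combination (norm := module) (2⁻¹ : ℝ) • hs1 - (2⁻¹ : ℝ) • hs2
      have hCb : Cv = (2⁻¹*(s3-s4)) • b := by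
        linear_combination (norm := module) (2⁻¹ : ℝ) • hs3 - (2⁻¹ : ℝ) • hs4
      by_cases hz : (2⁻¹*(s1-s2) : ℝ) = 0
      · refine ⟨0, Or.inr ?_⟩
        rw [hBb, hz]
        simp
      · refine ⟨(2⁻¹*(s3-s4))/(2⁻¹*(s1-s2)), Or.inl ?_⟩
        rw [hCb, hBb, smul_smul ((2⁻¹*(s3-s4))/(2⁻¹*(s1-s2))) (2⁻¹*(s1-s2)) b,
          div_mul_cancel₀ _ hz]
    · rintro ⟨t, h | h⟩
      · refine ⟨Hv, Bv, ?_⟩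
        rintro z hz
        obtain ⟨x, y, hxy, hz'⟩ := (hmemE z).mp hz
        exact ⟨(x^2-y^2) + 2*(x*y)*t, by rw [hz', h]; module⟩
      · refine ⟨Hv, Cv, ?_⟩
        rintro z hz
        obtain ⟨x, y, hxy, hz'⟩ := (hmemE z).mp hz
        exact ⟨(x^2-y^2)*t + 2*(x*y), by rw [hz', h]; module⟩
  -- inflection iff dependence plus incidence
  have hinfl : Inflection ψ q ↔
      ((∃ t : ℝ, Cv = t • Bv ∨ Bv = t • Cv) ∧ ∃ s t : ℝ, Hv = s • Bv + t • Cv) := by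
    constructor
    · rintro ⟨b, hline⟩
      have hsemi' : ∃ t : ℝ, Cv = t • Bv ∨ Bv = t • Cv := by
        apply hsemi.mp
        exact ⟨0, b, fun z hz => (hline hz).imp fun s hs => by rw [hs, zero_add]⟩
      obtain ⟨s1, hs1⟩ := hline hmem1
      obtain ⟨s2, hs2⟩ := hline hmem2
      obtain ⟨s3, hs3⟩ := hline hmem3
      obtain ⟨s4, hs4⟩ := hline hmem4
      have hHb : Hv = (2⁻¹*(s1+s2)) • b := by
        linear_combination (norm := module) (2⁻¹ : ℝ) • hs1 + (2⁻¹ : ℝ) • hs2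
      have hBb : Bv = (2⁻¹*(s1-s2)) • b := by
        linear_combination (norm := module) (2⁻¹ : ℝ) • hs1 - (2⁻¹ : ℝ) • hs2
      have hCb : Cv = (2⁻¹*(s3-s4)) • b := by
        linear_combination (norm := module) (2⁻¹ : ℝ) • hs3 - (2⁻¹ : ℝ) • hs4
      refine ⟨hsemi', ?_⟩
      by_cases hBz : (2⁻¹*(s1-s2) : ℝ) = 0
      · by_cases hCz : (2⁻¹*(s3-s4) : ℝ) = 0
        · exact absurd ⟨by rw [hBb, hBz]; simp, by rw [hCb, hCz]; simp⟩ hBC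
        · refine ⟨0, (2⁻¹*(s1+s2))/(2⁻¹*(s3-s4)), ?_⟩
          rw [hHb, hCb, smul_smul ((2⁻¹*(s1+s2))/(2⁻¹*(s3-s4))) (2⁻¹*(s3-s4)) b,
            div_mul_cancel₀ _ hCz]
          simp
      · refine ⟨(2⁻¹*(s1+s2))/(2⁻¹*(s1-s2)), 0, ?_⟩
        rw [hHb, hBb, smul_smul ((2⁻¹*(s1+s2))/(2⁻¹*(s1-s2))) (2⁻¹*(s1-s2)) b,
            div_mul_cancel₀ _ hBz]
        simp
    · rintro ⟨⟨t, hd | hd⟩, s, t', hc⟩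
      · refine ⟨Bv, ?_⟩
        rintro z hz
        obtain ⟨x, y, hxy, hz'⟩ := (hmemE z).mp hz
        exact ⟨s + t'*t + ((x^2-y^2) + 2*(x*y)*t), by rw [hz', hc, hd]; module⟩
      · refine ⟨Cv, ?_⟩
        rintro z hz
        obtain ⟨x, y, hxy, hz'⟩ := (hmemE z).mp hz
        exact ⟨s*t + t' + ((x^2-y^2)*t + 2*(x*y)), by rw [hz', hc, hd]; module⟩
  -- coordinates of (Bv, Cv) are not all zero
  have hbc' : ¬(⟪f 0, Bv⟫ = 0 ∧ ⟪f 1, Bv⟫ = 0 ∧ ⟪f 0, Cv⟫ = 0 ∧ ⟪f 1, Cv⟫ = 0) := by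
    rintro ⟨hb0, hb1, hc0, hc1⟩
    apply hBC
    constructor
    · rw [hNrep Bv hBN, hb0, hb1, zero_smul, zero_smul, add_zero]
    · rw [hNrep Cv hCN, hc0, hc1, zero_smul, zero_smul, add_zero]
  -- final assembly
  rw [hLiff, planar hbc']
  constructor
  · rintro ⟨hdep', hno⟩
    have hdep := hdep_iff.mpr hdep'
    exact ⟨hsemi.mpr hdep, fun hi => hno (hcombo_iff.mp (hinfl.mp hi).2)⟩
  · rintro ⟨hs, hni⟩
    have hdep := hsemi.mp hs
    exact ⟨hdep_iff.mp hdep, fun hc => hni (hinfl.mpr ⟨hdep, hcombo_iff.mpr hc⟩)⟩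
end
end

section
/- Let U and V be two surfaces immersed in ℝ⁴ and let f : U → V be a diffeomorphism such that for every p ∈ U one has T_pU = N_qV, where q = f(p) (and hence N_pU = T_qV). Then: a section Y of TU is parallel (∇^⊤Y = 0) if and only if Ỹ = Y∘f⁻¹, which is a section of NV, is parallel (∇^⊥Ỹ = 0); and a section u of NU is parallel if and only if u∘f⁻¹, which is a section of TV, is parallel. -/
/- Local framework: an immersed surface in ℝⁿ is given by a smooth parametrization
`ψ : Pl → Amb n` (`Pl = ℝ²` the parameter domain) whose differential is everywhere
injective.  Tangent/normal spaces, fundamental forms, connections, curvature ellipse,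
(semi)umbilic and inflection points, flatness, etc. are defined from `ψ`. -/

noncomputable section
open scoped RealInnerProductSpace

lemma proj_congr_aux {E : Type*} [NormedAddCommGroup E] [InnerProductSpace ℝ E]
    (K L : Submodule ℝ E) [CompleteSpace K] [CompleteSpace L]
    (h : K = L) (x : E) :
    (K.orthogonalProjectionOnto x : E) = L.orthogonalProjectionOnto x := by
  subst h; rfl

/-- Let `U, V` be surfaces in ℝ⁴ and `f : U → V` a diffeomorphism with
`T_pU = N_{f(p)}V` for all `p` (here `V` is parametrized by `χ`, the composition of `f`
with the parametrization `ψ` of `U`, so that `f` is the identity in parameters).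
A section `Y` of `TU` is parallel iff `Y∘f⁻¹`, a section of `NV`, is parallel; and a
section `u` of `NU` is parallel iff `u∘f⁻¹`, a section of `TV`, is parallel. -/
theorem statement_4 (ψ χ : Pl → Amb 4) (hψ : Immersion ψ) (hχ : Immersion χ)
    (hTN : ∀ q, Tang ψ q = Nor χ q) :
    (∀ Y : Pl → Amb 4, TangentField ψ Y → (ParallelT ψ Y ↔ ParallelN χ Y)) ∧
    (∀ u : Pl → Amb 4, NormalField ψ u → (ParallelN ψ u ↔ ParallelT χ u)) := by
  have hkey : ∀ q (x : Amb 4), tproj ψ q x = nproj χ q x := by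
    intro q x
    unfold tproj nproj tproj
    rw [proj_congr_aux _ _ (hTN q)]
    exact Submodule.starProjection_orthogonal_val (K := Tang χ q) x
  have hkey2 : ∀ q (x : Amb 4), nproj ψ q x = tproj χ q x := by
    intro q x
    have := hkey q x
    unfold nproj at this ⊢
    unfold tproj at this ⊢
    rw [this]
    abel
  constructor
  · intro Y _
    constructor
    · intro h q v; rw [← hkey]; exact h q v
    · intro h q v; rw [hkey]; exact h q v
  · intro u _
    constructor
    · intro h q v; rw [← hkey2]; exact h q v
    · intro h q v; rw [hkey2]; exact h q v
end
end

section
/- Let M be an immersed surface in ℝⁿ with normal bundle NM and first and second fundamental forms g and α. Let c be a section of NM and define f = id + c : M → ℝⁿ, i.e. f(p) = p + c_p. Then c·α = g (meaning ⟨c_p, α_p(X,Y)⟩ = ⟨X,Y⟩ for all p ∈ M and X,Y ∈ T_pM) if and only if df(T_pM) ⊂ N_pM for every p ∈ M. -/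
/- Local framework: an immersed surface in ℝⁿ is given by a smooth parametrization
`ψ : Pl → Amb n` (`Pl = ℝ²` the parameter domain) whose differential is everywhere
injective.  Tangent/normal spaces, fundamental forms, connections, curvature ellipse,
(semi)umbilic and inflection points, flatness, etc. are defined from `ψ`. -/

noncomputable section
open scoped RealInnerProductSpace

/-- For an immersed surface in ℝⁿ and a normal section `c`, putting
`f = id + c`, one has `c·α = g` iff `df(T_pM) ⊆ N_pM` for every `p`. -/
theorem statement_7 {n : ℕ} (ψ : Pl → Amb n) (hψ : Immersion ψ)
    (c : Pl → Amb n) (hc : NormalField ψ c) :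
    CAG ψ c ↔ ∀ q (v : Pl), fderiv ℝ (fun x => ψ x + c x) q v ∈ Nor ψ q := by
  have hψd : Differentiable ℝ ψ := hψ.1.differentiable (by simp)
  have hcd : Differentiable ℝ c := hc.1.differentiable (by simp)
  have hdψ : ∀ w : Pl, ContDiff ℝ (⊤ : ℕ∞) (fun x => fderiv ℝ ψ x w) := by
    intro w
    exact (hψ.1.fderiv_right (by exact_mod_cast le_top)).clm_apply contDiff_const
  -- derivative of sum
  have hsum : ∀ q (v : Pl), fderiv ℝ (fun x => ψ x + c x) q v
      = fderiv ℝ ψ q v + fderiv ℝ c q v := by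
    intro q v
    rw [fderiv_fun_add (hψd q) (hcd q)]; rfl
  -- key: ⟪c q, sff⟫ = -⟪dc v, dψ w⟫
  have key : ∀ q (v w : Pl), (⟪c q, sff ψ q v w⟫ : ℝ)
      = -⟪fderiv ℝ c q v, fderiv ℝ ψ q w⟫ := by
    intro q v w
    have hzero : (fun x => (⟪c x, fderiv ℝ ψ x w⟫ : ℝ)) = fun _ => 0 := by
      funext x
      exact real_inner_comm (c x) _ ▸ (hc.2 x) _ (LinearMap.mem_range_self (fderiv ℝ ψ x : Pl →ₗ[ℝ] Amb n) w)
    have h1 : fderiv ℝ (fun x => (⟪c x, fderiv ℝ ψ x w⟫ : ℝ)) q v = 0 := by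
      rw [hzero]; simp
    rw [fderiv_inner_apply ℝ (hcd q) (((hdψ w).differentiable (by simp)) q) v] at h1
    have h2 : (⟪c q, sff ψ q v w⟫ : ℝ)
        = ⟪c q, fderiv ℝ (fun x => fderiv ℝ ψ x w) q v⟫ := by
      have ht : (⟪c q, tproj ψ q (fderiv ℝ (fun x => fderiv ℝ ψ x w) q v)⟫ : ℝ) = 0 := by
        have hmem : tproj ψ q (fderiv ℝ (fun x => fderiv ℝ ψ x w) q v) ∈ Tang ψ q :=
          ((Tang ψ q).orthogonalProjectionOnto (fderiv ℝ (fun x => fderiv ℝ ψ x w) q v)).2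
        have := (hc.2 q) _ hmem
        rw [real_inner_comm]; exact this
      simp [sff, nproj, inner_sub_right, ht]
    rw [h2]
    linarith [h1]
  constructor
  · intro hC q v
    rw [hsum q v]
    intro u hu
    obtain ⟨w, hw⟩ := (show u ∈ LinearMap.range (fderiv ℝ ψ q : Pl →ₗ[ℝ] Amb n) from hu)
    rw [ContinuousLinearMap.coe_coe] at hw
    subst hw
    have := key q v w
    have hC' := hC q v w
    rw [this] at hC'
    rw [inner_add_right]
    linarith [hC', real_inner_comm (fderiv ℝ ψ q w) (fderiv ℝ ψ q v),
      real_inner_comm (fderiv ℝ ψ q w) (fderiv ℝ c q v)]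
  · intro hN q v w
    have := hN q v
    rw [hsum q v] at this
    have h := this (fderiv ℝ ψ q w) (LinearMap.mem_range_self (fderiv ℝ ψ q : Pl →ₗ[ℝ] Amb n) w)
    rw [inner_add_right] at h
    rw [key q v w]
    linarith [h, real_inner_comm (fderiv ℝ ψ q w) (fderiv ℝ ψ q v),
      real_inner_comm (fderiv ℝ ψ q w) (fderiv ℝ c q v)]
end
end

section
/- Let M be a flat semiumbilical surface immersed in ℝⁿ, let c be a normal section with c·α = g, let Z be a parallel tangent vector field on M (∇^⊤Z = 0), and put f = id + c + Z : M → ℝⁿ, f(p) = p + c_p + Z_p. Then df(T_pM) ⊂ N_pM for every p ∈ M. -/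
/- Local framework: an immersed surface in ℝⁿ is given by a smooth parametrization
`ψ : Pl → Amb n` (`Pl = ℝ²` the parameter domain) whose differential is everywhere
injective.  Tangent/normal spaces, fundamental forms, connections, curvature ellipse,
(semi)umbilic and inflection points, flatness, etc. are defined from `ψ`. -/

noncomputable section
open scoped RealInnerProductSpace

/-- For a flat semiumbilical surface in ℝⁿ, `c` a normal section with
`c·α = g` and `Z` a parallel tangent field, `f = id + c + Z` satisfies
`df(T_pM) ⊆ N_pM` for every `p`. -/
theorem statement_10 {n : ℕ} (ψ : Pl → Amb n) (hψ : Immersion ψ)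
    (hflat : FlatSurface ψ) (hsem : Semiumbilical ψ)
    (c : Pl → Amb n) (hc : NormalField ψ c) (hcg : CAG ψ c)
    (Z : Pl → Amb n) (hZ : TangentField ψ Z) (hZp : ParallelT ψ Z) :
    ∀ q (v : Pl), fderiv ℝ (fun x => ψ x + c x + Z x) q v ∈ Nor ψ q := by
  
  intro q v
  have hψd : Differentiable ℝ ψ := hψ.1.differentiable (by simp)
  have hcd : Differentiable ℝ c := hc.1.differentiable (by simp)
  have hZd : Differentiable ℝ Z := hZ.1.differentiable (by simp)
  -- derivative of sum
  have hsum : fderiv ℝ (fun x => ψ x + c x + Z x) q v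
      = fderiv ℝ ψ q v + fderiv ℝ c q v + fderiv ℝ Z q v := by
    rw [fderiv_fun_add (f := fun x => ψ x + c x) ((hψd q).add (hcd q)) (hZd q), fderiv_fun_add (hψd q) (hcd q)]
    rfl
  rw [hsum]
  rw [Nor, Submodule.mem_orthogonal]
  intro u hu
  obtain ⟨w, rfl⟩ : ∃ w, fderiv ℝ ψ q w = u := LinearMap.mem_range.mp hu
  -- Z part
  have hZn : fderiv ℝ Z q v ∈ (Tang ψ q)ᗮ := by
    have := hZp q v
    rw [tproj] at this
    exact Submodule.orthogonalProjectionOnto_eq_zero_iff.mp (by exact_mod_cast Subtype.ext this)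
  have hZ0 : ⟪fderiv ℝ ψ q w, fderiv ℝ Z q v⟫ = 0 :=
    (Submodule.mem_orthogonal _ _ |>.mp hZn) _ ⟨w, rfl⟩
  -- smoothness of x ↦ fderiv ψ x w
  have hA : ContDiff ℝ (⊤ : ℕ∞) (fun x => fderiv ℝ ψ x w) :=
    (hψ.1.fderiv_right (by exact_mod_cast le_top)).clm_apply contDiff_const
  have hAd : Differentiable ℝ (fun x => fderiv ℝ ψ x w) := hA.differentiable (by simp)
  -- ⟨c x, dψ_x w⟩ = 0 identically
  have hzero : ∀ x, (⟪c x, fderiv ℝ ψ x w⟫ : ℝ) = 0 := by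
    intro x
    rw [real_inner_comm]
    exact (Submodule.mem_orthogonal _ _ |>.mp (hc.2 x)) _ ⟨w, rfl⟩
  have hder : fderiv ℝ (fun x => (⟪c x, fderiv ℝ ψ x w⟫ : ℝ)) q v = 0 := by
    have : (fun x => (⟪c x, fderiv ℝ ψ x w⟫ : ℝ)) = fun _ => (0:ℝ) := funext hzero
    rw [this, fderiv_const_apply]; rfl
  rw [fderiv_inner_apply (𝕜 := ℝ) (hcd q) (hAd q) v] at hder
  -- ⟨c q, D⟩ = ⟨dψ v, dψ w⟩ from CAG
  have hcD : ⟪c q, fderiv ℝ (fun x => fderiv ℝ ψ x w) q v⟫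
      = ⟪fderiv ℝ ψ q v, fderiv ℝ ψ q w⟫ := by
    have h1 := hcg q v w
    rw [sff, nproj, inner_sub_right] at h1
    have h2 : ⟪c q, tproj ψ q (fderiv ℝ (fun x => fderiv ℝ ψ x w) q v)⟫ = 0 := by
      rw [real_inner_comm]
      exact (Submodule.mem_orthogonal _ _ |>.mp (hc.2 q)) _ (SetLike.coe_mem _)
    rw [h2, sub_zero] at h1
    exact h1
  have hcd0 : ⟪fderiv ℝ c q v, fderiv ℝ ψ q w⟫
      = -⟪fderiv ℝ ψ q v, fderiv ℝ ψ q w⟫ := by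
    rw [hcD] at hder; linarith
  rw [inner_add_right, inner_add_right, hZ0]
  have e1 := real_inner_comm (fderiv ℝ ψ q w) (fderiv ℝ c q v)
  have e2 := real_inner_comm (fderiv ℝ ψ q w) (fderiv ℝ ψ q v)
  linarith
end
end

section
/- Let M be a flat semiumbilical surface in ℝ⁴ and let c be the normal section with c·α = g. Then there is a unique tangent vector field j on M such that α(j,X) = ∇^⊥_X c for every tangent field X, and it is given by j = ½ grad(⟨c,c⟩); in a local orthonormal frame (t₁,t₂) of asymptotic directions with b₁ = α(t₁,t₁), b₂ = α(t₂,t₂), one has j = (⟨b₁, D_{t₁}c⟩/⟨b₁,b₁⟩) t₁ + (⟨b₂, D_{t₂}c⟩/⟨b₂,b₂⟩) t₂. -/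
/- Local framework: an immersed surface in ℝⁿ is given by a smooth parametrization
`ψ : Pl → Amb n` (`Pl = ℝ²` the parameter domain) whose differential is everywhere
injective.  Tangent/normal spaces, fundamental forms, connections, curvature ellipse,
(semi)umbilic and inflection points, flatness, etc. are defined from `ψ`. -/

noncomputable section
open scoped RealInnerProductSpace

namespace S11

/-! ### Calculus helpers -/

lemma cd_fderiv {E F : Type*} [NormedAddCommGroup E] [NormedSpace ℝ E]
    [NormedAddCommGroup F] [NormedSpace ℝ F] {f : E → F} (h : ContDiff ℝ (⊤:ℕ∞) f) :
    ContDiff ℝ (⊤:ℕ∞) (fderiv ℝ f) := by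
  refine h.fderiv_right ?_
  exact_mod_cast le_refl _

lemma fderiv_clm_apply_const {E F G : Type*} [NormedAddCommGroup E] [NormedSpace ℝ E]
    [NormedAddCommGroup F] [NormedSpace ℝ F] [NormedAddCommGroup G] [NormedSpace ℝ G]
    {c : E → F →L[ℝ] G} {q : E} (hc : DifferentiableAt ℝ c q) (w : F) (v : E) :
    fderiv ℝ (fun x => c x w) q v = (fderiv ℝ c q v) w := by
  have h := fderiv_clm_apply (𝕜 := ℝ) hc (differentiableAt_const w)
  have : (fun x => c x w) = fun y => c y ((fun _ : E => w) y) := rfl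
  rw [this, h]
  simp

variable {n : ℕ}

/-- second iterated derivative -/
def D2 (ψ : Pl → Amb n) (q v w : Pl) : Amb n := (fderiv ℝ (fderiv ℝ ψ) q v) w

/-- third iterated derivative -/
def D3 (ψ : Pl → Amb n) (q v u w : Pl) : Amb n :=
  ((fderiv ℝ (fderiv ℝ (fderiv ℝ ψ)) q v) u) w

variable {ψ : Pl → Amb n} (hs : ContDiff ℝ (⊤:ℕ∞) ψ)
include hs

lemma cd_dpsi_w (w : Pl) : ContDiff ℝ (⊤:ℕ∞) (fun x => fderiv ℝ ψ x w) :=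
  (cd_fderiv hs).clm_apply contDiff_const

lemma fderiv_dpsi (q v w : Pl) :
    fderiv ℝ (fun x => fderiv ℝ ψ x w) q v = D2 ψ q v w :=
  fderiv_clm_apply_const ((cd_fderiv hs).differentiable (by simp) q) w v

lemma D2_symm (q v w : Pl) : D2 ψ q v w = D2 ψ q w v :=
  second_derivative_symmetric
    (f' := fderiv ℝ ψ)
    (fun y => ((hs.differentiable (by simp)) y).hasFDerivAt)
    (((cd_fderiv hs).differentiable (by simp) q).hasFDerivAt) v w

lemma cd_D2_w (u w : Pl) : ContDiff ℝ (⊤:ℕ∞) (fun x => D2 ψ x u w) :=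
  (((cd_fderiv (cd_fderiv hs)).clm_apply contDiff_const).clm_apply contDiff_const)

lemma fderiv_D2 (q v u w : Pl) :
    fderiv ℝ (fun x => D2 ψ x u w) q v = D3 ψ q v u w := by
  have h1 : ContDiff ℝ (⊤:ℕ∞) (fun x => fderiv ℝ (fderiv ℝ ψ) x u) :=
    (cd_fderiv (cd_fderiv hs)).clm_apply contDiff_const
  have : (fun x => D2 ψ x u w) = fun x => (fun y => fderiv ℝ (fderiv ℝ ψ) y u) x w := rfl
  rw [this, fderiv_clm_apply_const ((h1).differentiable (by simp) q) w v]
  have : fderiv ℝ (fun y => fderiv ℝ (fderiv ℝ ψ) y u) q v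
      = (fderiv ℝ (fderiv ℝ (fderiv ℝ ψ)) q v) u :=
    fderiv_clm_apply_const (((cd_fderiv (cd_fderiv hs)).differentiable (by simp) q)) u v
  rw [this]; rfl

lemma D3_symm12 (q v u w : Pl) : D3 ψ q v u w = D3 ψ q u v w := by
  have := second_derivative_symmetric
    (f' := fderiv ℝ (fderiv ℝ ψ))
    (fun y => (((cd_fderiv hs).differentiable (by simp)) y).hasFDerivAt)
    (((cd_fderiv (cd_fderiv hs)).differentiable (by simp) q).hasFDerivAt) v u
  unfold D3
  rw [this]

end S11
namespace S11

lemma cdiff {E F : Type*} [NormedAddCommGroup E] [NormedSpace ℝ E]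
    [NormedAddCommGroup F] [NormedSpace ℝ F] {f : E → F} (h : ContDiff ℝ (⊤:ℕ∞) f) :
    Differentiable ℝ f := h.differentiable (by simp)

variable {n : ℕ} {ψ : Pl → Amb n} {q : Pl}

/-! ### projection algebra -/

lemma tproj_mem (x : Amb n) : tproj ψ q x ∈ Tang ψ q := ((Tang ψ q).orthogonalProjectionOnto x).2

lemma nproj_mem (x : Amb n) : nproj ψ q x ∈ Nor ψ q :=
  Submodule.sub_starProjection_mem_orthogonal (K := Tang ψ q) x

lemma nor_inner_tang {z t : Amb n} (hz : z ∈ Nor ψ q) (ht : t ∈ Tang ψ q) :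
    ⟪z, t⟫ = 0 := by
  have := (Submodule.mem_orthogonal _ z).mp hz t ht
  rw [real_inner_comm]; exact this

lemma tproj_eq_of_mem {x : Amb n} (h : x ∈ Tang ψ q) : tproj ψ q x = x := by
  unfold tproj; exact Submodule.starProjection_eq_self_iff.mpr h

lemma nproj_eq_zero_of_mem {x : Amb n} (h : x ∈ Tang ψ q) : nproj ψ q x = 0 := by
  unfold nproj; rw [tproj_eq_of_mem h, sub_self]

lemma tproj_eq_zero_of_mem {x : Amb n} (h : x ∈ Nor ψ q) : tproj ψ q x = 0 := by
  unfold tproj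
  rw [Submodule.orthogonalProjectionOnto_apply_of_mem_orthogonal h]
  rfl

lemma nproj_eq_of_mem {x : Amb n} (h : x ∈ Nor ψ q) : nproj ψ q x = x := by
  unfold nproj; rw [tproj_eq_zero_of_mem h, sub_zero]

lemma inner_nproj_nor {x z : Amb n} (hz : z ∈ Nor ψ q) : ⟪nproj ψ q x, z⟫ = ⟪x, z⟫ := by
  unfold nproj
  rw [inner_sub_left]
  have : ⟪tproj ψ q x, z⟫ = 0 := by
    rw [real_inner_comm]; exact nor_inner_tang hz (tproj_mem x)
  rw [this, sub_zero]

lemma inner_nproj_tang {x t : Amb n} (ht : t ∈ Tang ψ q) : ⟪nproj ψ q x, t⟫ = 0 :=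
  nor_inner_tang (nproj_mem x) ht

lemma tproj_add (x y : Amb n) : tproj ψ q (x + y) = tproj ψ q x + tproj ψ q y := by
  unfold tproj; rw [map_add]; rfl

lemma tproj_smul (r : ℝ) (x : Amb n) : tproj ψ q (r • x) = r • tproj ψ q x := by
  unfold tproj; rw [map_smul]; rfl

lemma nproj_add (x y : Amb n) : nproj ψ q (x + y) = nproj ψ q x + nproj ψ q y := by
  unfold nproj; rw [tproj_add]; abel

lemma nproj_smul (r : ℝ) (x : Amb n) : nproj ψ q (r • x) = r • nproj ψ q x := by
  unfold nproj; rw [tproj_smul, smul_sub]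

lemma dpsi_mem (v : Pl) : fderiv ℝ ψ q v ∈ Tang ψ q := LinearMap.mem_range.mpr ⟨v, rfl⟩

lemma sff_eq (hs : ContDiff ℝ (⊤:ℕ∞) ψ) (q v w : Pl) :
    sff ψ q v w = nproj ψ q (D2 ψ q v w) := by
  unfold sff; rw [fderiv_dpsi hs]

lemma sff_mem (v w : Pl) : sff ψ q v w ∈ Nor ψ q := nproj_mem _

lemma sff_symm (hs : ContDiff ℝ (⊤:ℕ∞) ψ) (q v w : Pl) : sff ψ q v w = sff ψ q w v := by
  rw [sff_eq hs, sff_eq hs, D2_symm hs]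

lemma inner_nor_D2 (hs : ContDiff ℝ (⊤:ℕ∞) ψ) {z : Amb n} (hz : z ∈ Nor ψ q) (v w : Pl) :
    ⟪z, D2 ψ q v w⟫ = ⟪z, sff ψ q v w⟫ := by
  rw [sff_eq hs]
  have : (D2 ψ q v w) = tproj ψ q (D2 ψ q v w) + nproj ψ q (D2 ψ q v w) := by
    unfold nproj; abel
  conv_lhs => rw [this]
  rw [inner_add_right]
  rw [nor_inner_tang hz (tproj_mem _), zero_add]

lemma inner_tang_D2 (hs : ContDiff ℝ (⊤:ℕ∞) ψ) {t : Amb n} (ht : t ∈ Tang ψ q) (v w : Pl) :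
    ⟪t, D2 ψ q v w⟫ = ⟪t, tproj ψ q (D2 ψ q v w)⟫ := by
  have : (D2 ψ q v w) = tproj ψ q (D2 ψ q v w) + nproj ψ q (D2 ψ q v w) := by
    unfold nproj; abel
  conv_lhs => rw [this]
  rw [inner_add_right]
  have : ⟪t, nproj ψ q (D2 ψ q v w)⟫ = 0 := by
    rw [real_inner_comm]; exact inner_nproj_tang ht
  rw [this, add_zero]

end S11
namespace S11

variable {n : ℕ} {ψ : Pl → Amb n}

lemma fderiv_eq_of_eqfun {E F : Type*} [NormedAddCommGroup E] [NormedSpace ℝ E]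
    [NormedAddCommGroup F] [NormedSpace ℝ F] {f g : E → F} (h : ∀ x, f x = g x) :
    fderiv ℝ f = fderiv ℝ g := by rw [funext h]

/-- Derivative pairing for a normal field:  ⟪D_v u, dψ w⟫ = -⟪u, ∂²ψ(v,w)⟫ -/
lemma normal_deriv_pair (hs : ContDiff ℝ (⊤:ℕ∞) ψ)
    {u : Pl → Amb n} (hu : ContDiff ℝ (⊤:ℕ∞) u) (hun : ∀ x, u x ∈ Nor ψ x)
    (q v w : Pl) :
    ⟪fderiv ℝ u q v, fderiv ℝ ψ q w⟫ = -⟪u q, D2 ψ q v w⟫ := by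
  have hz : ∀ x, (⟪u x, fderiv ℝ ψ x w⟫ : ℝ) = 0 := fun x =>
    nor_inner_tang (hun x) (dpsi_mem w)
  have hg : DifferentiableAt ℝ (fun x => fderiv ℝ ψ x w) q :=
    cdiff (cd_dpsi_w hs w) q
  have h0 : fderiv ℝ (fun x => (⟪u x, fderiv ℝ ψ x w⟫ : ℝ)) q v = 0 := by
    rw [fderiv_eq_of_eqfun hz]; simp
  have h1 := fderiv_inner_apply ℝ (cdiff hu q) hg v
  rw [h0] at h1
  rw [fderiv_dpsi hs] at h1
  linarith [h1]

/-- tangential derivative of `c`:  ⟪D_v c, dψ w⟫ = -⟪dψ v, dψ w⟫ -/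
lemma cag_deriv_pair (hs : ContDiff ℝ (⊤:ℕ∞) ψ)
    {c : Pl → Amb n} (hc : NormalField ψ c) (hcg : CAG ψ c) (q v w : Pl) :
    ⟪fderiv ℝ c q v, fderiv ℝ ψ q w⟫ = -⟪fderiv ℝ ψ q v, fderiv ℝ ψ q w⟫ := by
  rw [normal_deriv_pair hs hc.1 hc.2 q v w]
  rw [inner_nor_D2 hs (hc.2 q) v w, hcg q v w]

end S11
namespace S11

variable {n : ℕ} {ψ : Pl → Amb n}

lemma pl_decomp (v : Pl) :
    v = v 0 • EuclideanSpace.single 0 (1:ℝ) + v 1 • EuclideanSpace.single 1 (1:ℝ) := by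
  ext i
  fin_cases i <;> simp [EuclideanSpace.single_apply]

section Frame

variable (hψ : Immersion ψ) (T₁ T₂ : Pl → Pl)
  (hT₁ : ∀ q, ‖fderiv ℝ ψ q (T₁ q)‖ = 1) (hT₂ : ∀ q, ‖fderiv ℝ ψ q (T₂ q)‖ = 1)
  (hT₁₂ : ∀ q, ⟪fderiv ℝ ψ q (T₁ q), fderiv ℝ ψ q (T₂ q)⟫ = 0)

include hψ hT₁ hT₂ hT₁₂

lemma frame_inner_self₁ (q : Pl) : ⟪fderiv ℝ ψ q (T₁ q), fderiv ℝ ψ q (T₁ q)⟫ = 1 := by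
  rw [real_inner_self_eq_norm_mul_norm, hT₁ q]; norm_num

lemma frame_inner_self₂ (q : Pl) : ⟪fderiv ℝ ψ q (T₂ q), fderiv ℝ ψ q (T₂ q)⟫ = 1 := by
  rw [real_inner_self_eq_norm_mul_norm, hT₂ q]; norm_num

/-- every parameter vector decomposes in the frame `(T₁ q, T₂ q)` -/
lemma frame_span (q : Pl) (u : Pl) : ∃ a b : ℝ, u = a • T₁ q + b • T₂ q := by
  classical
  have hli : LinearIndependent ℝ ![T₁ q, T₂ q] := by
    rw [LinearIndependent.pair_iff]
    intro a b hab
    have h0 : fderiv ℝ ψ q (a • T₁ q + b • T₂ q) = 0 := by rw [hab]; simp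
    rw [map_add, map_smul, map_smul] at h0
    have h1 : ⟪fderiv ℝ ψ q (T₁ q),
        a • fderiv ℝ ψ q (T₁ q) + b • fderiv ℝ ψ q (T₂ q)⟫ = 0 := by
      rw [h0]; simp
    have h2 : ⟪fderiv ℝ ψ q (T₂ q),
        a • fderiv ℝ ψ q (T₁ q) + b • fderiv ℝ ψ q (T₂ q)⟫ = 0 := by
      rw [h0]; simp
    rw [inner_add_right, real_inner_smul_right, real_inner_smul_right,
      frame_inner_self₁ hψ T₁ T₂ hT₁ hT₂ hT₁₂ q, hT₁₂ q] at h1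
    rw [inner_add_right, real_inner_smul_right, real_inner_smul_right,
      frame_inner_self₂ hψ T₁ T₂ hT₁ hT₂ hT₁₂ q,
      real_inner_comm, hT₁₂ q] at h2
    constructor <;> nlinarith
  have hcard : Fintype.card (Fin 2) = Module.finrank ℝ Pl := by simp
  have hsp : Submodule.span ℝ (Set.range ![T₁ q, T₂ q]) = ⊤ := by
    apply Submodule.eq_top_of_finrank_eq
    rw [finrank_span_eq_card hli, hcard]
  have : u ∈ Submodule.span ℝ ({T₁ q, T₂ q} : Set Pl) := by
    have : Set.range ![T₁ q, T₂ q] = {T₁ q, T₂ q} := by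
      simp [Matrix.range_cons, Matrix.range_empty, Set.pair_comm]
    rw [← this, hsp]; trivial
  obtain ⟨a, b, hab⟩ := Submodule.mem_span_pair.mp this
  exact ⟨a, b, hab.symm⟩

/-- decomposition with explicit coefficients -/
lemma frame_coords (q : Pl) (u : Pl) :
    u = ⟪fderiv ℝ ψ q u, fderiv ℝ ψ q (T₁ q)⟫ • T₁ q
      + ⟪fderiv ℝ ψ q u, fderiv ℝ ψ q (T₂ q)⟫ • T₂ q := by
  obtain ⟨a, b, hab⟩ := frame_span hψ T₁ T₂ hT₁ hT₂ hT₁₂ q u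
  have hd : fderiv ℝ ψ q u = a • fderiv ℝ ψ q (T₁ q) + b • fderiv ℝ ψ q (T₂ q) := by
    rw [hab]; simp
  have h1 : ⟪fderiv ℝ ψ q u, fderiv ℝ ψ q (T₁ q)⟫ = a := by
    rw [hd, inner_add_left, real_inner_smul_left, real_inner_smul_left,
      frame_inner_self₁ hψ T₁ T₂ hT₁ hT₂ hT₁₂ q, real_inner_comm, hT₁₂ q]; ring
  have h2 : ⟪fderiv ℝ ψ q u, fderiv ℝ ψ q (T₂ q)⟫ = b := by
    rw [hd, inner_add_left, real_inner_smul_left, real_inner_smul_left,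
      frame_inner_self₂ hψ T₁ T₂ hT₁ hT₂ hT₁₂ q, hT₁₂ q]; ring
  rw [h1, h2, hab]

/-- decomposition of tangent vectors in the orthonormal frame `(e₁,e₂)` -/
lemma frame_decomp_tang (q : Pl) {x : Amb n} (hx : x ∈ Tang ψ q) :
    x = ⟪x, fderiv ℝ ψ q (T₁ q)⟫ • fderiv ℝ ψ q (T₁ q)
      + ⟪x, fderiv ℝ ψ q (T₂ q)⟫ • fderiv ℝ ψ q (T₂ q) := by
  obtain ⟨u, hu : fderiv ℝ ψ q u = x⟩ := LinearMap.mem_range.mp hx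
  have := frame_coords hψ T₁ T₂ hT₁ hT₂ hT₁₂ q u
  calc x = fderiv ℝ ψ q u := hu.symm
    _ = _ := by
        conv_lhs => rw [this]
        rw [map_add, map_smul, map_smul, hu]

/-- the tangential projection in terms of the frame -/
lemma tproj_formula (q : Pl) (x : Amb n) :
    tproj ψ q x = ⟪x, fderiv ℝ ψ q (T₁ q)⟫ • fderiv ℝ ψ q (T₁ q)
      + ⟪x, fderiv ℝ ψ q (T₂ q)⟫ • fderiv ℝ ψ q (T₂ q) := by
  set e₁ := fderiv ℝ ψ q (T₁ q) with he₁def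
  set e₂ := fderiv ℝ ψ q (T₂ q) with he₂def
  have h11 : (⟪e₁, e₁⟫:ℝ) = 1 := frame_inner_self₁ hψ T₁ T₂ hT₁ hT₂ hT₁₂ q
  have h22 : (⟪e₂, e₂⟫:ℝ) = 1 := frame_inner_self₂ hψ T₁ T₂ hT₁ hT₂ hT₁₂ q
  have h12 : (⟪e₁, e₂⟫:ℝ) = 0 := hT₁₂ q
  have h21 : (⟪e₂, e₁⟫:ℝ) = 0 := by rw [real_inner_comm]; exact h12
  apply Submodule.eq_starProjection_of_mem_of_inner_eq_zero
  · exact Submodule.add_mem _ (Submodule.smul_mem _ _ (dpsi_mem _))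
      (Submodule.smul_mem _ _ (dpsi_mem _))
  · intro w hw
    have he1 : (⟪x - (⟪x,e₁⟫ • e₁ + ⟪x,e₂⟫ • e₂), e₁⟫:ℝ) = 0 := by
      rw [inner_sub_left, inner_add_left, real_inner_smul_left, real_inner_smul_left,
        h11, h21]
      ring
    have he2 : (⟪x - (⟪x,e₁⟫ • e₁ + ⟪x,e₂⟫ • e₂), e₂⟫:ℝ) = 0 := by
      rw [inner_sub_left, inner_add_left, real_inner_smul_left, real_inner_smul_left,
        h22, h12]
      ring
    conv_lhs => rw [frame_decomp_tang hψ T₁ T₂ hT₁ hT₂ hT₁₂ q hw]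
    rw [inner_add_right, real_inner_smul_right, real_inner_smul_right, he1, he2]
    ring

end Frame

end S11
namespace S11

variable {n : ℕ} {ψ : Pl → Amb n}

lemma sff_add_left (hs : ContDiff ℝ (⊤:ℕ∞) ψ) (q a b w : Pl) :
    sff ψ q (a + b) w = sff ψ q a w + sff ψ q b w := by
  rw [sff_eq hs, sff_eq hs, sff_eq hs, ← nproj_add]
  unfold D2
  rw [map_add, ContinuousLinearMap.add_apply]

lemma sff_smul_left (hs : ContDiff ℝ (⊤:ℕ∞) ψ) (q : Pl) (r : ℝ) (a w : Pl) :
    sff ψ q (r • a) w = r • sff ψ q a w := by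
  rw [sff_eq hs, sff_eq hs, ← nproj_smul]
  unfold D2
  rw [map_smul, ContinuousLinearMap.smul_apply]

lemma sff_add_right (hs : ContDiff ℝ (⊤:ℕ∞) ψ) (q v a b : Pl) :
    sff ψ q v (a + b) = sff ψ q v a + sff ψ q v b := by
  rw [sff_eq hs, sff_eq hs, sff_eq hs, ← nproj_add]
  unfold D2
  rw [map_add]

lemma sff_smul_right (hs : ContDiff ℝ (⊤:ℕ∞) ψ) (q : Pl) (r : ℝ) (v a : Pl) :
    sff ψ q v (r • a) = r • sff ψ q v a := by
  rw [sff_eq hs, sff_eq hs, ← nproj_smul]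
  unfold D2
  rw [map_smul]

section Gauss

variable (hψ : Immersion ψ) (T₁ T₂ : Pl → Pl)
  (hT₁s : ContDiff ℝ (⊤:ℕ∞) T₁) (hT₂s : ContDiff ℝ (⊤:ℕ∞) T₂)
  (hT₁ : ∀ q, ‖fderiv ℝ ψ q (T₁ q)‖ = 1) (hT₂ : ∀ q, ‖fderiv ℝ ψ q (T₂ q)‖ = 1)
  (hT₁₂ : ∀ q, ⟪fderiv ℝ ψ q (T₁ q), fderiv ℝ ψ q (T₂ q)⟫ = 0)

include hψ hT₁s hT₂s hT₁ hT₂ hT₁₂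

/-- smoothness of the normal projection of a smooth field, via the frame formula -/
lemma cd_nproj_field {Y : Pl → Amb n} (hY : ContDiff ℝ (⊤:ℕ∞) Y) :
    ContDiff ℝ (⊤:ℕ∞) (fun x => nproj ψ x (Y x)) := by
  have hs := hψ.1
  have hE₁ : ContDiff ℝ (⊤:ℕ∞) (fun x => fderiv ℝ ψ x (T₁ x)) :=
    (cd_fderiv hs).clm_apply hT₁s
  have hE₂ : ContDiff ℝ (⊤:ℕ∞) (fun x => fderiv ℝ ψ x (T₂ x)) :=
    (cd_fderiv hs).clm_apply hT₂s
  have heq : (fun x => nproj ψ x (Y x)) = fun x =>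
      Y x - ((⟪Y x, fderiv ℝ ψ x (T₁ x)⟫:ℝ) • fderiv ℝ ψ x (T₁ x)
        + (⟪Y x, fderiv ℝ ψ x (T₂ x)⟫:ℝ) • fderiv ℝ ψ x (T₂ x)) := by
    funext x
    unfold nproj
    rw [tproj_formula hψ T₁ T₂ hT₁ hT₂ hT₁₂ x (Y x)]
  rw [heq]
  exact hY.sub (((ContDiff.inner ℝ hY hE₁).smul hE₁).add ((ContDiff.inner ℝ hY hE₂).smul hE₂))

/-- Gauss equation in the coordinate directions -/
lemma gauss_basis (hflat : FlatSurface ψ) (q u w : Pl) :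
    ⟪sff ψ q (EuclideanSpace.single 1 (1:ℝ)) u, sff ψ q (EuclideanSpace.single 0 (1:ℝ)) w⟫
    = ⟪sff ψ q (EuclideanSpace.single 0 (1:ℝ)) u,
        sff ψ q (EuclideanSpace.single 1 (1:ℝ)) w⟫ := by
  have hs := hψ.1
  -- the tangent coordinate field
  set F : Pl → Amb n := fun x => fderiv ℝ ψ x u with hF
  have hFt : TangentField ψ F := ⟨cd_dpsi_w hs u, fun x => dpsi_mem u⟩
  -- normal parts of its derivatives
  set B : Fin 2 → Pl → Amb n :=
    fun i x => nproj ψ x (D2 ψ x (EuclideanSpace.single i (1:ℝ)) u) with hB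
  have hBs : ∀ i, ContDiff ℝ (⊤:ℕ∞) (B i) := fun i =>
    cd_nproj_field hψ T₁ T₂ hT₁s hT₂s hT₁ hT₂ hT₁₂ (cd_D2_w hs _ u)
  have hBn : ∀ i x, B i x ∈ Nor ψ x := fun i x => nproj_mem _
  -- rewrite covT of F
  have hcov : ∀ i : Fin 2, covT ψ F i = fun x =>
      D2 ψ x (EuclideanSpace.single i (1:ℝ)) u - B i x := by
    intro i; funext x
    unfold covT
    rw [hF]
    rw [fderiv_dpsi hs]
    show tproj ψ x (D2 ψ x (EuclideanSpace.single i (1:ℝ)) u)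
      = D2 ψ x (EuclideanSpace.single i (1:ℝ)) u
        - nproj ψ x (D2 ψ x (EuclideanSpace.single i (1:ℝ)) u)
    unfold nproj
    abel
  -- second covariant derivatives
  have key : ∀ (i j : Fin 2), covT ψ (covT ψ F j) i q
      = tproj ψ q (D3 ψ q (EuclideanSpace.single i (1:ℝ)) (EuclideanSpace.single j (1:ℝ)) u)
        - tproj ψ q (fderiv ℝ (B j) q (EuclideanSpace.single i (1:ℝ))) := by
    intro i j
    have e0 : covT ψ (covT ψ F j) i q
        = tproj ψ q (fderiv ℝ (covT ψ F j) q (EuclideanSpace.single i (1:ℝ))) := rfl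
    rw [e0, hcov j]
    have hd1 : DifferentiableAt ℝ (fun x => D2 ψ x (EuclideanSpace.single j (1:ℝ)) u) q :=
      cdiff (cd_D2_w hs _ u) q
    have hd2 : DifferentiableAt ℝ (B j) q := cdiff (hBs j) q
    rw [fderiv_fun_sub hd1 hd2]
    rw [ContinuousLinearMap.sub_apply]
    rw [fderiv_D2 hs]
    have : tproj ψ q (D3 ψ q (EuclideanSpace.single i (1:ℝ)) (EuclideanSpace.single j (1:ℝ)) u
        - fderiv ℝ (B j) q (EuclideanSpace.single i (1:ℝ)))
        = tproj ψ q (D3 ψ q (EuclideanSpace.single i (1:ℝ)) (EuclideanSpace.single j (1:ℝ)) u)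
          - tproj ψ q (fderiv ℝ (B j) q (EuclideanSpace.single i (1:ℝ))) := by
      have hsub : ∀ (a b : Amb n), tproj ψ q (a - b) = tproj ψ q a - tproj ψ q b := by
        intro a b
        have := tproj_add (ψ := ψ) (q := q) (a - b) b
        rw [sub_add_cancel] at this
        rw [this]; abel
      exact hsub _ _
    rw [this]
  have hfl := hflat F hFt q
  rw [key 0 1, key 1 0] at hfl
  rw [D3_symm12 hs] at hfl
  have hBeq : tproj ψ q (fderiv ℝ (B 1) q (EuclideanSpace.single 0 (1:ℝ)))
      = tproj ψ q (fderiv ℝ (B 0) q (EuclideanSpace.single 1 (1:ℝ))) :=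
    sub_right_injective hfl
  -- pair with dψ w
  have pair : ∀ (i j : Fin 2) (w' : Pl),
      (⟪tproj ψ q (fderiv ℝ (B j) q (EuclideanSpace.single i (1:ℝ))), fderiv ℝ ψ q w'⟫:ℝ)
      = -⟪sff ψ q (EuclideanSpace.single j (1:ℝ)) u,
          sff ψ q (EuclideanSpace.single i (1:ℝ)) w'⟫ := by
    intro i j w'
    have h1 : (⟪tproj ψ q (fderiv ℝ (B j) q (EuclideanSpace.single i (1:ℝ))),
        fderiv ℝ ψ q w'⟫:ℝ)
        = ⟪fderiv ℝ (B j) q (EuclideanSpace.single i (1:ℝ)), fderiv ℝ ψ q w'⟫ := by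
      have hd : (fderiv ℝ (B j) q (EuclideanSpace.single i (1:ℝ)))
          = tproj ψ q (fderiv ℝ (B j) q (EuclideanSpace.single i (1:ℝ)))
            + nproj ψ q (fderiv ℝ (B j) q (EuclideanSpace.single i (1:ℝ))) := by
        unfold nproj; abel
      conv_rhs => rw [hd]
      rw [inner_add_left]
      rw [inner_nproj_tang (dpsi_mem w'), add_zero]
    rw [h1, normal_deriv_pair hs (hBs j) (hBn j) q _ w']
    rw [inner_nor_D2 hs (hBn j q)]
    have hBj : B j q = sff ψ q (EuclideanSpace.single j (1:ℝ)) u := by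
      simp only [hB]
      rw [← sff_eq hs]
    rw [hBj]
  have h01 := pair 0 1 w
  have h10 := pair 1 0 w
  rw [hBeq] at h01
  rw [h01] at h10
  linarith [h10]


/-- full Gauss symmetry -/
lemma gauss (hflat : FlatSurface ψ) (q x y u w : Pl) :
    ⟪sff ψ q x u, sff ψ q y w⟫ = ⟪sff ψ q y u, sff ψ q x w⟫ := by
  have hs := hψ.1
  have hdec : ∀ (z u' : Pl), sff ψ q z u'
      = z 0 • sff ψ q (EuclideanSpace.single 0 (1:ℝ)) u'
        + z 1 • sff ψ q (EuclideanSpace.single 1 (1:ℝ)) u' := by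
    intro z u'
    conv_lhs => rw [pl_decomp z]
    rw [sff_add_left hs, sff_smul_left hs, sff_smul_left hs]
  rw [hdec x u, hdec y w, hdec y u, hdec x w]
  have hg := gauss_basis hψ T₁ T₂ hT₁s hT₂s hT₁ hT₂ hT₁₂ hflat q u w
  simp only [inner_add_left, inner_add_right, real_inner_smul_left, real_inner_smul_right]
  linear_combination (norm := ring_nf) (x 1 * y 0 - x 0 * y 1) * hg

end Gauss

end S11
namespace S11

variable {n : ℕ} {ψ : Pl → Amb n}

lemma D2_decomp (hs : ContDiff ℝ (⊤:ℕ∞) ψ) (q a b : Pl) :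
    D2 ψ q a b = tproj ψ q (D2 ψ q a b) + sff ψ q a b := by
  rw [sff_eq hs]; unfold nproj; abel

/-- derivative of the identity ⟪c , α(u,w)⟫ = ⟪dψu, dψw⟫ -/
lemma cag_deriv_identity (hs : ContDiff ℝ (⊤:ℕ∞) ψ)
    {c : Pl → Amb n} (hc : NormalField ψ c) (hcg : CAG ψ c) (q v u w : Pl) :
    ⟪c q, D3 ψ q v u w⟫ + ⟪fderiv ℝ c q v, D2 ψ q u w⟫
    = ⟪fderiv ℝ ψ q u, D2 ψ q v w⟫ + ⟪D2 ψ q v u, fderiv ℝ ψ q w⟫ := by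
  have hz : ∀ x, (⟪c x, D2 ψ x u w⟫ : ℝ) = ⟪fderiv ℝ ψ x u, fderiv ℝ ψ x w⟫ := by
    intro x
    rw [inner_nor_D2 hs (hc.2 x), hcg x u w]
  have hfd := congrFun (fderiv_eq_of_eqfun hz) q
  have hL := fderiv_inner_apply ℝ (cdiff hc.1 q) (cdiff (cd_D2_w hs u w) q) v
  have hR := fderiv_inner_apply ℝ (cdiff (cd_dpsi_w hs u) q) (cdiff (cd_dpsi_w hs w) q) v
  rw [hfd, hR] at hL
  rw [fderiv_D2 hs, fderiv_dpsi hs, fderiv_dpsi hs] at hL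
  linarith [hL]

/-- Codazzi-type vanishing:  if α(v₁,v₂) = 0 then ⟪D_{v₁} c, α(v₂,v₂)⟫ = 0. -/
lemma codazzi_gen (hs : ContDiff ℝ (⊤:ℕ∞) ψ)
    {c : Pl → Amb n} (hc : NormalField ψ c) (hcg : CAG ψ c) (q v₁ v₂ : Pl)
    (h0 : sff ψ q v₁ v₂ = 0) :
    ⟪fderiv ℝ c q v₁, sff ψ q v₂ v₂⟫ = 0 := by
  have h1 := cag_deriv_identity hs hc hcg q v₁ v₂ v₂
  have h2 := cag_deriv_identity hs hc hcg q v₂ v₁ v₂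
  rw [D3_symm12 hs q v₂ v₁ v₂] at h2
  -- tangential projections
  have hpair : ∀ (v : Pl) (t : Amb n), t ∈ Tang ψ q →
      (⟪fderiv ℝ c q v, t⟫ : ℝ) = -⟪fderiv ℝ ψ q v, t⟫ := by
    intro v t ht
    obtain ⟨s, hst : fderiv ℝ ψ q s = t⟩ := LinearMap.mem_range.mp ht
    rw [← hst]
    exact cag_deriv_pair hs hc hcg q v s
  have e1 : (⟪fderiv ℝ c q v₁, D2 ψ q v₂ v₂⟫ : ℝ)
      = -⟪fderiv ℝ ψ q v₁, tproj ψ q (D2 ψ q v₂ v₂)⟫ + ⟪fderiv ℝ c q v₁, sff ψ q v₂ v₂⟫ := by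
    conv_lhs => rw [D2_decomp hs q v₂ v₂]
    rw [inner_add_right, hpair v₁ _ (tproj_mem _)]
  have e2 : (⟪fderiv ℝ c q v₂, D2 ψ q v₁ v₂⟫ : ℝ)
      = -⟪fderiv ℝ ψ q v₂, tproj ψ q (D2 ψ q v₁ v₂)⟫ := by
    conv_lhs => rw [D2_decomp hs q v₁ v₂]
    rw [inner_add_right, hpair v₂ _ (tproj_mem _), h0, inner_zero_right, add_zero]
  have e3 : (⟪fderiv ℝ ψ q v₂, D2 ψ q v₁ v₂⟫ : ℝ)
      = ⟪fderiv ℝ ψ q v₂, tproj ψ q (D2 ψ q v₁ v₂)⟫ :=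
    inner_tang_D2 hs (dpsi_mem v₂) v₁ v₂
  have e4 : (⟪fderiv ℝ ψ q v₁, D2 ψ q v₂ v₂⟫ : ℝ)
      = ⟪fderiv ℝ ψ q v₁, tproj ψ q (D2 ψ q v₂ v₂)⟫ :=
    inner_tang_D2 hs (dpsi_mem v₁) v₂ v₂
  have e5 : (⟪D2 ψ q v₁ v₂, fderiv ℝ ψ q v₂⟫ : ℝ) = ⟪fderiv ℝ ψ q v₂, D2 ψ q v₁ v₂⟫ :=
    real_inner_comm _ _
  have e6 : D2 ψ q v₂ v₁ = D2 ψ q v₁ v₂ := D2_symm hs q v₂ v₁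
  rw [e6] at h2
  have e7 : (⟪D2 ψ q v₁ v₂, fderiv ℝ ψ q v₂⟫:ℝ) = ⟪fderiv ℝ ψ q v₂, tproj ψ q (D2 ψ q v₁ v₂)⟫ := by
    rw [e5, e3]
  -- subtract h2 from h1
  linarith [h1, h2, e1, e2, e3, e4, e7]

end S11
namespace S11

lemma finrank_nor {ψ : Pl → Amb 4} (hψ : Immersion ψ) (q : Pl) :
    Module.finrank ℝ (Nor ψ q) = 2 := by
  have h1 : Module.finrank ℝ (Tang ψ q) = 2 := by
    have hEq : Tang ψ q = LinearMap.range ((fderiv ℝ ψ q).toLinearMap) := rfl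
    rw [hEq, LinearMap.finrank_range_of_inj (hψ.2 q)]
    simp
  have h2 := Submodule.finrank_add_finrank_orthogonal (K := Tang ψ q)
  have h3 : Module.finrank ℝ (Amb 4) = 4 := by simp
  unfold Nor
  omega

lemma nor_decomp {ψ : Pl → Amb 4} (hψ : Immersion ψ) {q : Pl} {b₁ b₂ : Amb 4}
    (hb₁ : b₁ ∈ Nor ψ q) (hb₂ : b₂ ∈ Nor ψ q) (h12 : ⟪b₁, b₂⟫ = 0)
    (h1 : b₁ ≠ 0) (h2 : b₂ ≠ 0) {x : Amb 4} (hx : x ∈ Nor ψ q) :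
    x = ((⟪x, b₁⟫:ℝ) / ⟪b₁, b₁⟫) • b₁ + ((⟪x, b₂⟫:ℝ) / ⟪b₂, b₂⟫) • b₂ := by
  have hb₁n : (⟪b₁, b₁⟫:ℝ) ≠ 0 := fun h => h1 (inner_self_eq_zero.mp h)
  have hb₂n : (⟪b₂, b₂⟫:ℝ) ≠ 0 := fun h => h2 (inner_self_eq_zero.mp h)
  have h21 : (⟪b₂, b₁⟫:ℝ) = 0 := by rw [real_inner_comm]; exact h12
  have hli : LinearIndependent ℝ ![b₁, b₂] := by
    rw [LinearIndependent.pair_iff]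
    intro a b hab
    have i1 : (⟪b₁, a • b₁ + b • b₂⟫:ℝ) = 0 := by rw [hab]; simp
    have i2 : (⟪b₂, a • b₁ + b • b₂⟫:ℝ) = 0 := by rw [hab]; simp
    rw [inner_add_right, real_inner_smul_right, real_inner_smul_right, h12] at i1
    rw [inner_add_right, real_inner_smul_right, real_inner_smul_right, h21] at i2
    constructor
    · have : a * ⟪b₁, b₁⟫ = 0 := by linarith
      rcases mul_eq_zero.mp this with h | h
      · exact h
      · exact absurd h hb₁n
    · have : b * ⟪b₂, b₂⟫ = 0 := by linarith
      rcases mul_eq_zero.mp this with h | h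
      · exact h
      · exact absurd h hb₂n
  have hle : Submodule.span ℝ ({b₁, b₂} : Set (Amb 4)) ≤ Nor ψ q := by
    rw [Submodule.span_le]
    intro z hz
    rcases hz with h | h
    · rw [h]; exact hb₁
    · rw [Set.mem_singleton_iff.mp h]; exact hb₂
  have hrange : Set.range ![b₁, b₂] = ({b₁, b₂} : Set (Amb 4)) := by
    simp [Matrix.range_cons, Matrix.range_empty, Set.pair_comm]
  have hfr : Module.finrank ℝ (Submodule.span ℝ ({b₁, b₂} : Set (Amb 4))) = 2 := by
    rw [← hrange, finrank_span_eq_card hli]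
    simp
  have heq : Submodule.span ℝ ({b₁, b₂} : Set (Amb 4)) = Nor ψ q := by
    apply Submodule.eq_of_le_of_finrank_le hle
    rw [hfr, finrank_nor hψ q]
  have hxs : x ∈ Submodule.span ℝ ({b₁, b₂} : Set (Amb 4)) := by rw [heq]; exact hx
  obtain ⟨a, b, hab⟩ := Submodule.mem_span_pair.mp hxs
  have i1 : (⟪x, b₁⟫:ℝ) = a * ⟪b₁, b₁⟫ := by
    rw [← hab, inner_add_left, real_inner_smul_left, real_inner_smul_left, h21]; ring
  have i2 : (⟪x, b₂⟫:ℝ) = b * ⟪b₂, b₂⟫ := by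
    rw [← hab, inner_add_left, real_inner_smul_left, real_inner_smul_left, h12]; ring
  have c1 : (⟪x, b₁⟫:ℝ) / ⟪b₁, b₁⟫ = a := by rw [i1, mul_div_cancel_right₀ _ hb₁n]
  have c2 : (⟪x, b₂⟫:ℝ) / ⟪b₂, b₂⟫ = b := by rw [i2, mul_div_cancel_right₀ _ hb₂n]
  rw [c1, c2, hab]

end S11
namespace S11

section Master

variable {ψ : Pl → Amb 4} (hψ : Immersion ψ) (hflat : FlatSurface ψ)
  {c : Pl → Amb 4} (hc : NormalField ψ c) (hcg : CAG ψ c)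
  (T₁ T₂ : Pl → Pl)
  (hT₁s : ContDiff ℝ (⊤:ℕ∞) T₁) (hT₂s : ContDiff ℝ (⊤:ℕ∞) T₂)
  (hT₁ : ∀ q, ‖fderiv ℝ ψ q (T₁ q)‖ = 1) (hT₂ : ∀ q, ‖fderiv ℝ ψ q (T₂ q)‖ = 1)
  (hT₁₂ : ∀ q, ⟪fderiv ℝ ψ q (T₁ q), fderiv ℝ ψ q (T₂ q)⟫ = 0)
  (hb₃ : ∀ q, sff ψ q (T₁ q) (T₂ q) = 0)

include hψ hc hcg hT₁ hT₂ hT₁₂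

/-- the tangential part of `D_v c` is `-dψ v` -/
lemma tproj_dc (q v : Pl) : tproj ψ q (fderiv ℝ c q v) = -fderiv ℝ ψ q v := by
  have hs := hψ.1
  rw [tproj_formula hψ T₁ T₂ hT₁ hT₂ hT₁₂ q]
  rw [cag_deriv_pair hs hc hcg q v (T₁ q), cag_deriv_pair hs hc hcg q v (T₂ q)]
  have := tproj_formula hψ T₁ T₂ hT₁ hT₂ hT₁₂ q (fderiv ℝ ψ q v)
  rw [tproj_eq_of_mem (dpsi_mem v)] at this
  rw [neg_smul, neg_smul]
  rw [show (-(⟪fderiv ℝ ψ q v, fderiv ℝ ψ q (T₁ q)⟫ • fderiv ℝ ψ q (T₁ q))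
      + -(⟪fderiv ℝ ψ q v, fderiv ℝ ψ q (T₂ q)⟫ • fderiv ℝ ψ q (T₂ q)))
      = -((⟪fderiv ℝ ψ q v, fderiv ℝ ψ q (T₁ q)⟫:ℝ) • fderiv ℝ ψ q (T₁ q)
        + (⟪fderiv ℝ ψ q v, fderiv ℝ ψ q (T₂ q)⟫:ℝ) • fderiv ℝ ψ q (T₂ q)) from by abel]
  rw [← this]

/-- uniqueness of the tangent field `j` -/
lemma uniq {j j' : Pl → Amb 4} (hj : TangentField ψ j) (hj' : TangentField ψ j')
    (hje : ∀ q (v : Pl), nproj ψ q (fderiv ℝ j q v) = nproj ψ q (fderiv ℝ c q v))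
    (hje' : ∀ q (v : Pl), nproj ψ q (fderiv ℝ j' q v) = nproj ψ q (fderiv ℝ c q v)) :
    j = j' := by
  have hs := hψ.1
  funext q
  have hd : ∀ v : Pl, (⟪fderiv ℝ ψ q v, j q - j' q⟫:ℝ) = 0 := by
    intro v
    -- the function ⟪j - j', c⟫ vanishes
    have hz : ∀ x, (⟪j x - j' x, c x⟫:ℝ) = 0 := by
      intro x
      have : j x - j' x ∈ Tang ψ x := Submodule.sub_mem _ (hj.2 x) (hj'.2 x)
      rw [real_inner_comm]
      exact nor_inner_tang (hc.2 x) this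
    have hdiff : Differentiable ℝ (fun x => j x - j' x) := (cdiff hj.1).sub (cdiff hj'.1)
    have h0 : fderiv ℝ (fun x => (⟪j x - j' x, c x⟫:ℝ)) q v = 0 := by
      rw [fderiv_eq_of_eqfun hz]; simp
    have h1 := fderiv_inner_apply ℝ (hdiff q) (cdiff hc.1 q) v
    rw [h0] at h1
    -- fderiv of difference
    have h2 : fderiv ℝ (fun x => j x - j' x) q v = fderiv ℝ j q v - fderiv ℝ j' q v := by
      rw [fderiv_fun_sub (cdiff hj.1 q) (cdiff hj'.1 q)]; rfl
    rw [h2] at h1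
    -- the difference of the derivatives is tangent
    have h3 : fderiv ℝ j q v - fderiv ℝ j' q v ∈ Tang ψ q := by
      have e1 : fderiv ℝ j q v = tproj ψ q (fderiv ℝ j q v) + nproj ψ q (fderiv ℝ j q v) := by
        unfold nproj; abel
      have e2 : fderiv ℝ j' q v = tproj ψ q (fderiv ℝ j' q v) + nproj ψ q (fderiv ℝ j' q v) := by
        unfold nproj; abel
      rw [e1, e2, hje q v, hje' q v]
      have : tproj ψ q (fderiv ℝ j q v) + nproj ψ q (fderiv ℝ c q v)
          - (tproj ψ q (fderiv ℝ j' q v) + nproj ψ q (fderiv ℝ c q v))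
          = tproj ψ q (fderiv ℝ j q v) - tproj ψ q (fderiv ℝ j' q v) := by abel
      rw [this]
      exact Submodule.sub_mem _ (tproj_mem _) (tproj_mem _)
    have h4 : (⟪fderiv ℝ j q v - fderiv ℝ j' q v, c q⟫:ℝ) = 0 := by
      rw [real_inner_comm]; exact nor_inner_tang (hc.2 q) h3
    rw [h4, add_zero] at h1
    -- ⟪j q - j' q, fderiv c q v⟫ = -⟪j q - j' q, dψ v⟫
    have h5 : fderiv ℝ c q v = tproj ψ q (fderiv ℝ c q v) + nproj ψ q (fderiv ℝ c q v) := by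
      unfold nproj; abel
    rw [h5, inner_add_right,
      tproj_dc hψ hc hcg T₁ T₂ hT₁ hT₂ hT₁₂ q v] at h1
    have h6 : (⟪j q - j' q, nproj ψ q (fderiv ℝ c q v)⟫:ℝ) = 0 := by
      rw [real_inner_comm]
      exact inner_nproj_tang (Submodule.sub_mem _ (hj.2 q) (hj'.2 q))
    rw [h6, add_zero, inner_neg_right] at h1
    rw [real_inner_comm]
    linarith [h1]
  obtain ⟨u, hu : fderiv ℝ ψ q u = j q - j' q⟩ := LinearMap.mem_range.mp (Submodule.sub_mem _ (hj.2 q) (hj'.2 q))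
  have := hd u
  rw [hu, real_inner_self_eq_norm_sq] at this
  have : j q - j' q = 0 := by
    rw [← hu]
    have hn : ‖j q - j' q‖ = 0 := by
      rw [← hu] at this ⊢
      nlinarith [norm_nonneg ((fderiv ℝ ψ q) u)]
    exact norm_eq_zero.mp (by rw [← hu] at hn; exact hn)
  have := sub_eq_zero.mp this
  exact this

end Master

end S11
namespace S11

/-- coefficient of the candidate field -/
def acoef (ψ c : Pl → Amb 4) (T : Pl → Pl) (q : Pl) : ℝ :=
  (⟪sff ψ q (T q) (T q), fderiv ℝ c q (T q)⟫:ℝ)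
    / ⟪sff ψ q (T q) (T q), sff ψ q (T q) (T q)⟫

/-- the candidate in parameter coordinates -/
def Wf (ψ c : Pl → Amb 4) (T₁ T₂ : Pl → Pl) (q : Pl) : Pl :=
  acoef ψ c T₁ q • T₁ q + acoef ψ c T₂ q • T₂ q

/-- the candidate tangent field -/
def jf (ψ c : Pl → Amb 4) (T₁ T₂ : Pl → Pl) (q : Pl) : Amb 4 :=
  fderiv ℝ ψ q (Wf ψ c T₁ T₂ q)

lemma jf_eq (ψ c : Pl → Amb 4) (T₁ T₂ : Pl → Pl) (q : Pl) :
    jf ψ c T₁ T₂ q = acoef ψ c T₁ q • fderiv ℝ ψ q (T₁ q)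
      + acoef ψ c T₂ q • fderiv ℝ ψ q (T₂ q) := by
  unfold jf Wf
  rw [map_add, map_smul, map_smul]

section Master2

variable {ψ : Pl → Amb 4} (hψ : Immersion ψ) (hflat : FlatSurface ψ)
  {c : Pl → Amb 4} (hc : NormalField ψ c) (hcg : CAG ψ c)
  (T₁ T₂ : Pl → Pl)
  (hT₁s : ContDiff ℝ (⊤:ℕ∞) T₁) (hT₂s : ContDiff ℝ (⊤:ℕ∞) T₂)
  (hT₁ : ∀ q, ‖fderiv ℝ ψ q (T₁ q)‖ = 1) (hT₂ : ∀ q, ‖fderiv ℝ ψ q (T₂ q)‖ = 1)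
  (hT₁₂ : ∀ q, ⟪fderiv ℝ ψ q (T₁ q), fderiv ℝ ψ q (T₂ q)⟫ = 0)
  (hb₃ : ∀ q, sff ψ q (T₁ q) (T₂ q) = 0)

include hψ hc hcg hT₁ hT₂ hT₁₂

/-- `⟪c, b⟫ = 1` for `b` a diagonal value on a unit vector -/
lemma cb_one₁ (q : Pl) : (⟪c q, sff ψ q (T₁ q) (T₁ q)⟫:ℝ) = 1 := by
  rw [hcg]; exact frame_inner_self₁ hψ T₁ T₂ hT₁ hT₂ hT₁₂ q

lemma cb_one₂ (q : Pl) : (⟪c q, sff ψ q (T₂ q) (T₂ q)⟫:ℝ) = 1 := by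
  rw [hcg]; exact frame_inner_self₂ hψ T₁ T₂ hT₁ hT₂ hT₁₂ q

lemma b_ne₁ (q : Pl) : sff ψ q (T₁ q) (T₁ q) ≠ 0 := by
  intro h
  have := cb_one₁ hψ hc hcg T₁ T₂ hT₁ hT₂ hT₁₂ q
  rw [h, inner_zero_right] at this
  norm_num at this

lemma b_ne₂ (q : Pl) : sff ψ q (T₂ q) (T₂ q) ≠ 0 := by
  intro h
  have := cb_one₂ hψ hc hcg T₁ T₂ hT₁ hT₂ hT₁₂ q
  rw [h, inner_zero_right] at this
  norm_num at this

include hflat hT₁s hT₂s hb₃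

/-- orthogonality of `b₁` and `b₂` (Gauss equation) -/
lemma b_orth (q : Pl) : (⟪sff ψ q (T₁ q) (T₁ q), sff ψ q (T₂ q) (T₂ q)⟫:ℝ) = 0 := by
  have h := gauss hψ T₁ T₂ hT₁s hT₂s hT₁ hT₂ hT₁₂ hflat q (T₁ q) (T₂ q) (T₁ q) (T₂ q)
  rw [sff_symm hψ.1 q (T₂ q) (T₁ q), hb₃ q] at h
  rw [h, inner_zero_left]

/-- key step: `(D_{t_i} c)^⊥` is proportional to `b_i` -/
lemma nproj_dc₁ (q : Pl) :
    nproj ψ q (fderiv ℝ c q (T₁ q)) = acoef ψ c T₁ q • sff ψ q (T₁ q) (T₁ q) := by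
  have hs := hψ.1
  have h12 := b_orth hψ hflat hc hcg T₁ T₂ hT₁s hT₂s hT₁ hT₂ hT₁₂ hb₃ q
  have nd := nor_decomp hψ (sff_mem (T₁ q) (T₁ q)) (sff_mem (T₂ q) (T₂ q)) h12
    (b_ne₁ hψ hc hcg T₁ T₂ hT₁ hT₂ hT₁₂ q) (b_ne₂ hψ hc hcg T₁ T₂ hT₁ hT₂ hT₁₂ q)
    (nproj_mem (fderiv ℝ c q (T₁ q)))
  have i1 : (⟪nproj ψ q (fderiv ℝ c q (T₁ q)), sff ψ q (T₁ q) (T₁ q)⟫:ℝ)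
      = ⟪fderiv ℝ c q (T₁ q), sff ψ q (T₁ q) (T₁ q)⟫ :=
    inner_nproj_nor (sff_mem _ _)
  have i2 : (⟪nproj ψ q (fderiv ℝ c q (T₁ q)), sff ψ q (T₂ q) (T₂ q)⟫:ℝ) = 0 := by
    rw [inner_nproj_nor (sff_mem _ _)]
    exact codazzi_gen hs hc hcg q (T₁ q) (T₂ q) (hb₃ q)
  rw [nd, i1, i2]
  rw [zero_div, zero_smul, add_zero]
  unfold acoef
  rw [real_inner_comm (fderiv ℝ c q (T₁ q)) (sff ψ q (T₁ q) (T₁ q))]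

lemma nproj_dc₂ (q : Pl) :
    nproj ψ q (fderiv ℝ c q (T₂ q)) = acoef ψ c T₂ q • sff ψ q (T₂ q) (T₂ q) := by
  have hs := hψ.1
  have h12 := b_orth hψ hflat hc hcg T₁ T₂ hT₁s hT₂s hT₁ hT₂ hT₁₂ hb₃ q
  have nd := nor_decomp hψ (sff_mem (T₁ q) (T₁ q)) (sff_mem (T₂ q) (T₂ q)) h12
    (b_ne₁ hψ hc hcg T₁ T₂ hT₁ hT₂ hT₁₂ q) (b_ne₂ hψ hc hcg T₁ T₂ hT₁ hT₂ hT₁₂ q)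
    (nproj_mem (fderiv ℝ c q (T₂ q)))
  have i2 : (⟪nproj ψ q (fderiv ℝ c q (T₂ q)), sff ψ q (T₂ q) (T₂ q)⟫:ℝ)
      = ⟪fderiv ℝ c q (T₂ q), sff ψ q (T₂ q) (T₂ q)⟫ :=
    inner_nproj_nor (sff_mem _ _)
  have i1 : (⟪nproj ψ q (fderiv ℝ c q (T₂ q)), sff ψ q (T₁ q) (T₁ q)⟫:ℝ) = 0 := by
    rw [inner_nproj_nor (sff_mem _ _)]
    exact codazzi_gen hs hc hcg q (T₂ q) (T₁ q)
      (by rw [sff_symm hs q (T₂ q) (T₁ q)]; exact hb₃ q)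
  rw [nd, i1, i2]
  rw [zero_div, zero_smul, zero_add]
  unfold acoef
  rw [real_inner_comm (fderiv ℝ c q (T₂ q)) (sff ψ q (T₂ q) (T₂ q))]

/-- normal part of `D_v c` in general, matching `α(v, W)` -/
lemma nproj_dc_full (q v : Pl) :
    nproj ψ q (fderiv ℝ c q v)
    = (⟪fderiv ℝ ψ q v, fderiv ℝ ψ q (T₁ q)⟫:ℝ) • (acoef ψ c T₁ q • sff ψ q (T₁ q) (T₁ q))
      + (⟪fderiv ℝ ψ q v, fderiv ℝ ψ q (T₂ q)⟫:ℝ)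
        • (acoef ψ c T₂ q • sff ψ q (T₂ q) (T₂ q)) := by
  have hv := frame_coords hψ T₁ T₂ hT₁ hT₂ hT₁₂ q v
  conv_lhs => rw [hv, map_add, map_smul, map_smul, nproj_add, nproj_smul, nproj_smul]
  rw [nproj_dc₁ hψ hflat hc hcg T₁ T₂ hT₁s hT₂s hT₁ hT₂ hT₁₂ hb₃ q,
    nproj_dc₂ hψ hflat hc hcg T₁ T₂ hT₁s hT₂s hT₁ hT₂ hT₁₂ hb₃ q]

/-- the candidate's second fundamental form values agree -/
lemma sff_W (q v : Pl) :
    sff ψ q v (Wf ψ c T₁ T₂ q)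
    = (⟪fderiv ℝ ψ q v, fderiv ℝ ψ q (T₁ q)⟫:ℝ) • (acoef ψ c T₁ q • sff ψ q (T₁ q) (T₁ q))
      + (⟪fderiv ℝ ψ q v, fderiv ℝ ψ q (T₂ q)⟫:ℝ)
        • (acoef ψ c T₂ q • sff ψ q (T₂ q) (T₂ q)) := by
  have hs := hψ.1
  have hv := frame_coords hψ T₁ T₂ hT₁ hT₂ hT₁₂ q v
  have hsv₁ : sff ψ q v (T₁ q)
      = (⟪fderiv ℝ ψ q v, fderiv ℝ ψ q (T₁ q)⟫:ℝ) • sff ψ q (T₁ q) (T₁ q) := by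
    conv_lhs => rw [hv]
    rw [sff_add_left hs, sff_smul_left hs, sff_smul_left hs,
      sff_symm hs q (T₂ q) (T₁ q), hb₃ q, smul_zero, add_zero]
  have hsv₂ : sff ψ q v (T₂ q)
      = (⟪fderiv ℝ ψ q v, fderiv ℝ ψ q (T₂ q)⟫:ℝ) • sff ψ q (T₂ q) (T₂ q) := by
    conv_lhs => rw [hv]
    rw [sff_add_left hs, sff_smul_left hs, sff_smul_left hs, hb₃ q, smul_zero, zero_add]
  unfold Wf
  rw [sff_add_right hs, sff_smul_right hs, sff_smul_right hs, hsv₁, hsv₂]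
  rw [smul_comm (acoef ψ c T₁ q), smul_comm (acoef ψ c T₂ q)]

end Master2

end S11
namespace S11

section Master3

variable {ψ : Pl → Amb 4} (hψ : Immersion ψ) (hflat : FlatSurface ψ)
  {c : Pl → Amb 4} (hc : NormalField ψ c) (hcg : CAG ψ c)
  (T₁ T₂ : Pl → Pl)
  (hT₁s : ContDiff ℝ (⊤:ℕ∞) T₁) (hT₂s : ContDiff ℝ (⊤:ℕ∞) T₂)
  (hT₁ : ∀ q, ‖fderiv ℝ ψ q (T₁ q)‖ = 1) (hT₂ : ∀ q, ‖fderiv ℝ ψ q (T₂ q)‖ = 1)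
  (hT₁₂ : ∀ q, ⟪fderiv ℝ ψ q (T₁ q), fderiv ℝ ψ q (T₂ q)⟫ = 0)
  (hb₃ : ∀ q, sff ψ q (T₁ q) (T₂ q) = 0)

include hψ hc hcg hT₁s hT₂s hT₁ hT₂ hT₁₂

/-- smoothness of the diagonal sff field along `T` -/
lemma cd_bfield (T : Pl → Pl) (hTs : ContDiff ℝ (⊤:ℕ∞) T) :
    ContDiff ℝ (⊤:ℕ∞) (fun q => sff ψ q (T q) (T q)) := by
  have hs := hψ.1
  have heq : (fun q => sff ψ q (T q) (T q))
      = fun q => nproj ψ q ((fderiv ℝ (fderiv ℝ ψ) q (T q)) (T q)) := by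
    funext q
    rw [sff_eq hs]
    rfl
  rw [heq]
  exact cd_nproj_field hψ T₁ T₂ hT₁s hT₂s hT₁ hT₂ hT₁₂
    (((cd_fderiv (cd_fderiv hs)).clm_apply hTs).clm_apply hTs)

/-- smoothness of the coefficient function -/
lemma cd_acoef (T : Pl → Pl) (hTs : ContDiff ℝ (⊤:ℕ∞) T)
    (hTn : ∀ q, ‖fderiv ℝ ψ q (T q)‖ = 1) :
    ContDiff ℝ (⊤:ℕ∞) (acoef ψ c T) := by
  have hs := hψ.1
  have hB := cd_bfield hψ hc hcg T₁ T₂ hT₁s hT₂s hT₁ hT₂ hT₁₂ T hTs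
  have hDc : ContDiff ℝ (⊤:ℕ∞) (fun q => fderiv ℝ c q (T q)) :=
    (cd_fderiv hc.1).clm_apply hTs
  have hden : ∀ q, (⟪sff ψ q (T q) (T q), sff ψ q (T q) (T q)⟫:ℝ) ≠ 0 := by
    intro q
    have h1 : (⟪c q, sff ψ q (T q) (T q)⟫:ℝ) = 1 := by
      rw [hcg, real_inner_self_eq_norm_mul_norm, hTn q]; norm_num
    intro h
    have : sff ψ q (T q) (T q) = 0 := inner_self_eq_zero.mp h
    rw [this, inner_zero_right] at h1
    norm_num at h1
  exact ContDiff.div (ContDiff.inner ℝ hB hDc) (ContDiff.inner ℝ hB hB) hden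

lemma cd_W : ContDiff ℝ (⊤:ℕ∞) (Wf ψ c T₁ T₂) := by
  have h1 := cd_acoef hψ hc hcg T₁ T₂ hT₁s hT₂s hT₁ hT₂ hT₁₂ T₁ hT₁s hT₁
  have h2 := cd_acoef hψ hc hcg T₁ T₂ hT₁s hT₂s hT₁ hT₂ hT₁₂ T₂ hT₂s hT₂
  exact (h1.smul hT₁s).add (h2.smul hT₂s)

lemma jf_tangent : TangentField ψ (jf ψ c T₁ T₂) := by
  constructor
  · have : ContDiff ℝ (⊤:ℕ∞) (fun q => (fderiv ℝ ψ q) (Wf ψ c T₁ T₂ q)) :=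
      (cd_fderiv hψ.1).clm_apply (cd_W hψ hc hcg T₁ T₂ hT₁s hT₂s hT₁ hT₂ hT₁₂)
    exact this
  · intro q
    exact dpsi_mem _

include hflat hb₃

lemma jf_sol (q v : Pl) :
    nproj ψ q (fderiv ℝ (jf ψ c T₁ T₂) q v) = nproj ψ q (fderiv ℝ c q v) := by
  have hs := hψ.1
  have hWd : DifferentiableAt ℝ (Wf ψ c T₁ T₂) q :=
    cdiff (cd_W hψ hc hcg T₁ T₂ hT₁s hT₂s hT₁ hT₂ hT₁₂) q
  have heq : ∀ x, jf ψ c T₁ T₂ x = (fun y => (fderiv ℝ ψ y) (Wf ψ c T₁ T₂ y)) x :=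
    fun _ => rfl
  have h := fderiv_clm_apply (cdiff (cd_fderiv hs) q) hWd
  have h2 : fderiv ℝ (jf ψ c T₁ T₂) q v
      = fderiv ℝ ψ q (fderiv ℝ (Wf ψ c T₁ T₂) q v) + D2 ψ q v (Wf ψ c T₁ T₂ q) := by
    rw [fderiv_eq_of_eqfun heq, h]
    rfl
  rw [h2, nproj_add, nproj_eq_zero_of_mem (dpsi_mem _), zero_add, ← sff_eq hs]
  rw [sff_W hψ hflat hc hcg T₁ T₂ hT₁s hT₂s hT₁ hT₂ hT₁₂ hb₃ q v]
  rw [← nproj_dc_full hψ hflat hc hcg T₁ T₂ hT₁s hT₂s hT₁ hT₂ hT₁₂ hb₃ q v]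

lemma jf_grad (q v : Pl) :
    2 * (⟪jf ψ c T₁ T₂ q, fderiv ℝ ψ q v⟫:ℝ)
    = fderiv ℝ (fun x => (⟪c x, c x⟫:ℝ)) q v := by
  have hs := hψ.1
  have hR := fderiv_inner_apply ℝ (cdiff hc.1 q) (cdiff hc.1 q) v
  rw [hR, real_inner_comm ((fderiv ℝ c q) v) (c q)]
  have hdc : fderiv ℝ c q v = tproj ψ q (fderiv ℝ c q v) + nproj ψ q (fderiv ℝ c q v) := by
    unfold nproj; abel
  have hcv : (⟪c q, fderiv ℝ c q v⟫:ℝ)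
      = (⟪fderiv ℝ ψ q v, fderiv ℝ ψ q (T₁ q)⟫:ℝ) * acoef ψ c T₁ q
        + (⟪fderiv ℝ ψ q v, fderiv ℝ ψ q (T₂ q)⟫:ℝ) * acoef ψ c T₂ q := by
    conv_lhs => rw [hdc]
    rw [inner_add_right, nor_inner_tang (hc.2 q) (tproj_mem _), zero_add]
    rw [nproj_dc_full hψ hflat hc hcg T₁ T₂ hT₁s hT₂s hT₁ hT₂ hT₁₂ hb₃ q v]
    rw [inner_add_right, real_inner_smul_right, real_inner_smul_right,
      real_inner_smul_right, real_inner_smul_right,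
      cb_one₁ hψ hc hcg T₁ T₂ hT₁ hT₂ hT₁₂ q, cb_one₂ hψ hc hcg T₁ T₂ hT₁ hT₂ hT₁₂ q]
    ring
  have hjv : (⟪jf ψ c T₁ T₂ q, fderiv ℝ ψ q v⟫:ℝ)
      = acoef ψ c T₁ q * (⟪fderiv ℝ ψ q v, fderiv ℝ ψ q (T₁ q)⟫:ℝ)
        + acoef ψ c T₂ q * (⟪fderiv ℝ ψ q v, fderiv ℝ ψ q (T₂ q)⟫:ℝ) := by
    rw [jf_eq, inner_add_left, real_inner_smul_left, real_inner_smul_left,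
      real_inner_comm (fderiv ℝ ψ q (T₁ q)), real_inner_comm (fderiv ℝ ψ q (T₂ q))]
  have hswap : (⟪fderiv ℝ c q v, c q⟫:ℝ) = ⟪c q, fderiv ℝ c q v⟫ := real_inner_comm _ _
  linarith [hjv, hcv, hswap]

end Master3

end S11

open S11 in

/-- On a flat semiumbilical surface in ℝ⁴ with normal section `c`
satisfying `c·α = g`, there is a unique tangent field `j` with
`α(j,X) = ∇^⊥_X c` for all tangent `X` (for a tangent field `j`, `α(X,j) = (D_X j)^⊥`),
and it equals `½ grad⟨c,c⟩`; in an orthonormal frame `(t₁,t₂)` of asymptotic directions,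
`j = (⟨b₁,D_{t₁}c⟩/⟨b₁,b₁⟩) t₁ + (⟨b₂,D_{t₂}c⟩/⟨b₂,b₂⟩) t₂`. -/
theorem statement_11 (ψ : Pl → Amb 4) (hψ : Immersion ψ)
    (hflat : FlatSurface ψ) (hsem : Semiumbilical ψ)
    (c : Pl → Amb 4) (hc : NormalField ψ c) (hcg : CAG ψ c)
    (T₁ T₂ : Pl → Pl)
    (hT₁s : ContDiff ℝ (⊤ : ℕ∞) T₁) (hT₂s : ContDiff ℝ (⊤ : ℕ∞) T₂)
    (hT₁ : ∀ q, ‖fderiv ℝ ψ q (T₁ q)‖ = 1) (hT₂ : ∀ q, ‖fderiv ℝ ψ q (T₂ q)‖ = 1)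
    (hT₁₂ : ∀ q, ⟪fderiv ℝ ψ q (T₁ q), fderiv ℝ ψ q (T₂ q)⟫ = 0)
    (hb₃ : ∀ q, sff ψ q (T₁ q) (T₂ q) = 0) :
    (∃! j : Pl → Amb 4, TangentField ψ j ∧
        ∀ q (v : Pl), nproj ψ q (fderiv ℝ j q v) = nproj ψ q (fderiv ℝ c q v)) ∧
    ∀ j : Pl → Amb 4, TangentField ψ j →
      (∀ q (v : Pl), nproj ψ q (fderiv ℝ j q v) = nproj ψ q (fderiv ℝ c q v)) →
      HalfGradCSq ψ c j ∧
      ∀ q, j q =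
        ((⟪sff ψ q (T₁ q) (T₁ q), fderiv ℝ c q (T₁ q)⟫ : ℝ) /
            (⟪sff ψ q (T₁ q) (T₁ q), sff ψ q (T₁ q) (T₁ q)⟫ : ℝ)) • fderiv ℝ ψ q (T₁ q) +
        ((⟪sff ψ q (T₂ q) (T₂ q), fderiv ℝ c q (T₂ q)⟫ : ℝ) /
            (⟪sff ψ q (T₂ q) (T₂ q), sff ψ q (T₂ q) (T₂ q)⟫ : ℝ)) • fderiv ℝ ψ q (T₂ q) := by
  have hjt := jf_tangent hψ hc hcg T₁ T₂ hT₁s hT₂s hT₁ hT₂ hT₁₂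
  have hjs := jf_sol hψ hflat hc hcg T₁ T₂ hT₁s hT₂s hT₁ hT₂ hT₁₂ hb₃
  constructor
  · refine ⟨jf ψ c T₁ T₂, ⟨hjt, hjs⟩, ?_⟩
    intro y hy
    exact uniq hψ hc hcg T₁ T₂ hT₁ hT₂ hT₁₂ hy.1 hjt hy.2 hjs
  · intro j hj hje
    have hjeq : j = jf ψ c T₁ T₂ :=
      uniq hψ hc hcg T₁ T₂ hT₁ hT₂ hT₁₂ hj hjt hje hjs
    subst hjeq
    constructor
    · exact ⟨hjt, jf_grad hψ hflat hc hcg T₁ T₂ hT₁s hT₂s hT₁ hT₂ hT₁₂ hb₃⟩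
    · intro q
      rw [jf_eq]
      rfl
end
end
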